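/- arXiv:1611.03889 — 4 statements merged into one kernel-verified Lean document; each statement's English description precedes it below -/
import Mathlib

section
/- Let G be a biconnected graph and H a biconnected subgraph of G. Then there exists an open ear decomposition E_1, E_2, ..., E_k of G such that H = E_1 ∪ E_2 ∪ ... ∪ E_j for some j ≤ k. -/
open SimpleGraph

universe u

variable {V : Type u}

/-- Two walks with the same endpoints are internally vertex-disjoint. -/
def IntDisjoint {G : SimpleGraph V} {x y : V} (p q : G.Walk x y) : Prop :=
  ∀ v ∈ p.support, v ∈ q.support → v = x ∨ v = y

/-- There are `k` pairwise internally vertex-disjoint `x`-`y` paths in `G`. -/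
def ConnK (G : SimpleGraph V) (k : ℕ) (x y : V) : Prop :=
  ∃ P : Fin k → G.Walk x y, (∀ i, (P i).IsPath) ∧
    ∀ i j, i ≠ j → IntDisjoint (P i) (P j)

/-- `G` is `(Q,r)`-vertex-connected. -/
def QRConn (G : SimpleGraph V) (Q : Set V) (r : V → ℕ) : Prop :=
  ∀ x ∈ Q, ∀ y ∈ Q, x ≠ y → ConnK G (min (r x) (r y)) x y

/-- Delete a vertex (isolate it). -/
def delV (G : SimpleGraph V) (v : V) : SimpleGraph V where
  Adj a b := G.Adj a b ∧ a ≠ v ∧ b ≠ v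
  symm := by constructor; intro a b h; exact ⟨h.1.symm, h.2.2, h.2.1⟩
  loopless := by constructor; intro a h; exact G.loopless.irrefl a h.1

/-- `G` is minimally `(Q,r)`-vertex-connected: it is `(Q,r)`-vertex-connected but
deleting any edge or any vertex destroys this property. -/
def MinQR (G : SimpleGraph V) (Q : Set V) (r : V → ℕ) : Prop :=
  QRConn G Q r ∧ (∀ e ∈ G.edgeSet, ¬ QRConn (G.deleteEdges {e}) Q r) ∧
    ∀ v : V, ¬ QRConn (delV G v) Q r

/-- Biconnected: at least 3 vertices, connected, and no cut vertex. -/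
def Biconnected (G : SimpleGraph V) : Prop :=
  3 ≤ Nat.card V ∧ G.Connected ∧ ∀ v : V, (SimpleGraph.induce {w | w ≠ v} G).Connected

/-- Three-vertex-connected: more than 3 vertices and removing any at most 2
vertices leaves the graph connected. -/
def ThreeConnected (G : SimpleGraph V) : Prop :=
  4 ≤ Nat.card V ∧ ∀ s : Set V, s.ncard ≤ 2 → (SimpleGraph.induce sᶜ G).Connected

/-- Degree of a vertex. -/
noncomputable def vdeg (G : SimpleGraph V) (v : V) : ℕ := (G.neighborSet v).ncard

/-- The contracted version of `G`: suppress all degree-2 vertices.  Two vertices of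
degree `≠ 2` are adjacent iff they are joined by a path all of whose internal
vertices have degree 2. -/
def suppress (G : SimpleGraph V) : SimpleGraph {v : V // vdeg G v ≠ 2} where
  Adj u v := u ≠ v ∧ ∃ p : G.Walk u.1 v.1, p.IsPath ∧
      ∀ w ∈ p.support, w ≠ u.1 → w ≠ v.1 → vdeg G w = 2
  symm := by
    constructor
    rintro u v ⟨hne, p, hp, hint⟩
    refine ⟨hne.symm, p.reverse, hp.reverse, ?_⟩
    intro w hw h1 h2
    rw [SimpleGraph.Walk.support_reverse, List.mem_reverse] at hw
    exact hint w hw h2 h1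
  loopless := by constructor; intro u h; exact h.1 rfl

/-- The removal operation of Holton–Jackson–Saito–Wormald: delete the edge `uv`,
suppress any resulting degree-2 vertices and simplify parallel edges; the edge is
removable when the result is three-connected. -/
def Removable (G : SimpleGraph V) (u v : V) : Prop :=
  ThreeConnected (suppress (G.deleteEdges {s(u, v)}))

/-- An open ear decomposition of `G`: a first ear that is a cycle, followed by
open ears (paths with distinct endpoints) whose endpoints lie on earlier ears and
whose internal vertices are new, the ears partitioning the edge set of `G`. -/
structure OpenEarDecomp (G : SimpleGraph V) where
  k : ℕ
  v0 : V
  C : G.Walk v0 v0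
  hC : C.IsCycle
  a : Fin k → V
  b : Fin k → V
  P : (i : Fin k) → G.Walk (a i) (b i)
  hP : ∀ i, (P i).IsPath
  hopen : ∀ i, a i ≠ b i
  ha : ∀ i : Fin k, a i ∈ C.support ∨ ∃ j : Fin k, j < i ∧ a i ∈ (P j).support
  hb : ∀ i : Fin k, b i ∈ C.support ∨ ∃ j : Fin k, j < i ∧ b i ∈ (P j).support
  hnew : ∀ i : Fin k, ∀ w ∈ (P i).support, w ≠ a i → w ≠ b i →
      w ∉ C.support ∧ ∀ j : Fin k, j < i → w ∉ (P j).support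
  hdisjC : ∀ i : Fin k, ∀ e ∈ (P i).edges, e ∉ C.edges
  hdisjP : ∀ i j : Fin k, i ≠ j → ∀ e ∈ (P i).edges, e ∉ (P j).edges
  hcover : ∀ e ∈ G.edgeSet, e ∈ C.edges ∨ ∃ i : Fin k, e ∈ (P i).edges

section EarDev

variable {G : SimpleGraph V}

namespace EarAux

/-- Find a prefix of a path ending at the first vertex in `S`. -/
lemma prefix_to_S (S : Set V) :
    ∀ {y z : V} (q : G.Walk y z), z ∈ S → q.IsPath →
      ∃ (w : V) (r : G.Walk y w), w ∈ S ∧ r.IsPath ∧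
        (∀ v ∈ r.support, v ≠ w → v ∉ S) ∧
        (∀ v ∈ r.support, v ∈ q.support) ∧ (∀ e ∈ r.edges, e ∈ q.edges) := by
  intro y z q
  induction q with
  | nil =>
    intro hz _
    exact ⟨_, Walk.nil, hz, Walk.IsPath.nil, by simp, by simp, by simp⟩
  | @cons y b z h q' ih =>
    intro hz hq
    by_cases hy : y ∈ S
    · exact ⟨_, Walk.nil, hy, Walk.IsPath.nil, by simp, by simp, by simp⟩
    · obtain ⟨w, r', hwS, hr'p, hint, hsub, hesub⟩ :=
        ih hz (((Walk.cons_isPath_iff h q').1 hq).1)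
      refine ⟨w, Walk.cons h r', hwS, ?_, ?_, ?_, ?_⟩
      · rw [Walk.cons_isPath_iff]
        exact ⟨hr'p, fun hy' => ((Walk.cons_isPath_iff h q').1 hq).2 (hsub _ hy')⟩
      · intro v hv hvw
        rcases List.mem_cons.1 (Walk.support_cons h r' ▸ hv) with h' | h'
        · exact h' ▸ hy
        · exact hint v h' hvw
      · intro v hv
        rcases List.mem_cons.1 (Walk.support_cons h r' ▸ hv) with h' | h'
        · simp [h']
        · exact Walk.support_cons h q' ▸ List.mem_cons_of_mem _ (hsub _ h')
      · intro e he
        rw [Walk.edges_cons] at he ⊢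
        rcases List.mem_cons.1 he with he | he
        · exact he ▸ List.mem_cons_self
        · exact List.mem_cons_of_mem _ (hesub _ he)


/-- Walking from inside `S`, either we end in `S`, or we find an edge out of `ES`
starting in `S`. -/
lemma walk_claim (S : Set V) (ES : Set (Sym2 V))
    (hSE : ∀ x y : V, s(x, y) ∈ ES → x ∈ S) :
    ∀ {s t : V} (_ : G.Walk s t), s ∈ S →
      t ∈ S ∨ ∃ u v, G.Adj u v ∧ u ∈ S ∧ s(u, v) ∉ ES := by
  intro s t p
  induction p with
  | nil => exact fun hs => .inl hs
  | @cons s b t h q ih =>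
    intro hs
    by_cases hES : s(s, b) ∈ ES
    · exact ih (hSE b s (Sym2.eq_swap ▸ hES))
    · exact .inr ⟨s, b, h, hs, hES⟩

/-- From connectivity without a cut vertex: a path between two vertices avoiding
a third vertex. -/
lemma path_avoiding (hG : Biconnected G) {u v z : V} (hv : v ≠ u) (hz : z ≠ u) :
    ∃ q : G.Walk v z, q.IsPath ∧ ∀ w ∈ q.support, w ≠ u := by
  have hconn := hG.2.2 u
  obtain ⟨q0⟩ := hconn.preconnected ⟨v, hv⟩ ⟨z, hz⟩
  classical
  let q1 := (q0.toPath : (SimpleGraph.induce {w | w ≠ u} G).Walk ⟨v, hv⟩ ⟨z, hz⟩)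
  have hq1 : q1.IsPath := q0.toPath.2
  refine ⟨q1.map (SimpleGraph.Embedding.induce {w | w ≠ u}).toHom, ?_, ?_⟩
  · exact Walk.map_isPath_of_injective (Subtype.val_injective) hq1
  · intro w hw
    change w ∈ (q1.map (SimpleGraph.Embedding.induce {w | w ≠ u}).toHom).support at hw
    rw [Walk.support_map, List.mem_map] at hw
    obtain ⟨⟨w', hw'⟩, _, rfl⟩ := hw
    exact hw'

/-- The key extension step: given a vertex set `S` (with two elements) and an
edge set `ES` spanned by `S`, and an uncovered edge, there is an open ear. -/
lemma exists_ear (hG : Biconnected G) (S : Set V) (ES : Set (Sym2 V))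
    (hES : ES ⊆ G.edgeSet)
    (hSE : ∀ x y : V, s(x, y) ∈ ES → x ∈ S)
    (hS2 : ∃ x y : V, x ∈ S ∧ y ∈ S ∧ x ≠ y)
    {e : Sym2 V} (he : e ∈ G.edgeSet) (hne : e ∉ ES) :
    ∃ (x y : V) (p : G.Walk x y), x ≠ y ∧ x ∈ S ∧ y ∈ S ∧ p.IsPath ∧
      (∀ v ∈ p.support, v ≠ x → v ≠ y → v ∉ S) ∧ (∀ e' ∈ p.edges, e' ∉ ES) := by
  classical
  -- first find an uncovered edge with an endpoint in S
  obtain ⟨u, v, huv, huS, hcov⟩ :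
      ∃ u v, G.Adj u v ∧ u ∈ S ∧ s(u, v) ∉ ES := by
    induction e using Sym2.ind with
    | _ x y =>
      obtain ⟨s0, _, hs0, _, _⟩ := hS2
      obtain ⟨p0⟩ := hG.2.1.preconnected s0 x
      rcases walk_claim S ES hSE p0 hs0 with hxS | found
      · exact ⟨x, y, he, hxS, hne⟩
      · exact found
  by_cases hvS : v ∈ S
  · -- chord
    refine ⟨u, v, Walk.cons huv Walk.nil, huv.ne, huS, hvS, ?_, ?_, ?_⟩
    · simp [Walk.cons_isPath_iff, huv.ne]
    · intro w hw hw1 hw2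
      exfalso
      simp only [Walk.support_cons, Walk.support_nil, List.mem_cons,
        List.mem_singleton, List.not_mem_nil, or_false] at hw
      rcases hw with rfl | rfl
      · exact hw1 rfl
      · exact hw2 rfl
    · intro e' he'
      simp only [Walk.edges_cons, Walk.edges_nil, List.mem_singleton,
        List.not_mem_nil, or_false, List.mem_cons] at he'
      rw [he']
      exact hcov
  · -- real ear: go from v back to S avoiding u
    obtain ⟨x0, y0, hx0, hy0, hxy0⟩ := hS2
    obtain ⟨z, hzS, hzu⟩ : ∃ z, z ∈ S ∧ z ≠ u := by
      by_cases h : x0 = u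
      · exact ⟨y0, hy0, h ▸ hxy0.symm⟩
      · exact ⟨x0, hx0, h⟩
    obtain ⟨q, hq, hqu⟩ := path_avoiding hG (v := v) (z := z) huv.ne' hzu
    obtain ⟨w, r, hwS, hrp, hint, hsub, _⟩ := EarAux.prefix_to_S S q hzS hq
    have hru : ∀ x ∈ r.support, x ≠ u := fun x hx => hqu x (hsub x hx)
    have hwu : w ≠ u := hru w r.end_mem_support
    refine ⟨u, w, Walk.cons huv r, hwu.symm, huS, hwS, ?_, ?_, ?_⟩
    · rw [Walk.cons_isPath_iff]
      exact ⟨hrp, fun hu => hru u hu rfl⟩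
    · intro w' hw' hw'u hw'w
      rcases List.mem_cons.1 (Walk.support_cons huv r ▸ hw') with rfl | h'
      · exact absurd rfl hw'u
      · exact hint w' h' hw'w
    · intro e' he'
      rcases List.mem_cons.1 (Walk.edges_cons huv r ▸ he') with rfl | h'
      · exact fun hmem => hvS (hSE v u (Sym2.eq_swap ▸ hmem))
      · intro hmem
        induction e' using Sym2.ind with
        | _ a b =>
          have haS : a ∈ S := hSE a b hmem
          have hbS : b ∈ S := hSE b a (Sym2.eq_swap ▸ hmem)
          have haw : a = w := by
            by_contra hne
            exact hint a (r.fst_mem_support_of_mem_edges h') hne haS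
          have hbw : b = w := by
            by_contra hne
            exact hint b (r.snd_mem_support_of_mem_edges h') hne hbS
          subst haw; subst hbw
          exact ((SimpleGraph.mem_edgeSet (G := G)).1 (hES hmem)).ne rfl

/-- Every vertex of a biconnected graph has two distinct neighbours. -/
lemma adj_of_walk {W : Type*} {G' : SimpleGraph W} {a b : W} (p : G'.Walk a b)
    (hab : a ≠ b) : ∃ c, G'.Adj a c := by
  cases p with
  | nil => exact absurd rfl hab
  | cons h _ => exact ⟨_, h⟩

lemma two_neighbors (hG : Biconnected G) (u : V) :
    ∃ v w, G.Adj u v ∧ G.Adj u w ∧ v ≠ w := by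
  classical
  have hcard := hG.1
  have hfin : Finite V := by
    rcases Nat.card_pos_iff.mp (by omega : 0 < Nat.card V) with ⟨_, h⟩
    exact h
  -- first neighbour
  obtain ⟨v', hv'⟩ : ∃ v', v' ≠ u := by
    have : Nontrivial V := Finite.one_lt_card_iff_nontrivial.mp (by omega)
    exact exists_ne u
  obtain ⟨p⟩ := hG.2.1.preconnected u v'
  obtain ⟨v, huv⟩ := adj_of_walk p hv'.symm
  -- a third vertex
  obtain ⟨t, ht⟩ : ∃ t, t ∉ ({u, v} : Set V) := by
    rw [← Set.ne_univ_iff_exists_notMem]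
    intro hcontra
    have h1 : ({u, v} : Set V).ncard ≤ 2 := by
      apply le_trans (Set.ncard_insert_le _ _)
      simp
    have h2 : (Set.univ : Set V).ncard = Nat.card V := Set.ncard_univ V
    rw [hcontra, h2] at h1
    omega
  simp only [Set.mem_insert_iff, Set.mem_singleton_iff, not_or] at ht
  -- second neighbour, avoiding v
  obtain ⟨q⟩ := (hG.2.2 v).preconnected ⟨u, fun h => huv.ne h⟩ ⟨t, ht.2⟩
  obtain ⟨c, hc⟩ := adj_of_walk q (by
    intro hEq
    exact ht.1 (congrArg Subtype.val hEq).symm)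
  exact ⟨v, c.1, huv, hc, fun hvb => c.2 hvb.symm⟩

/-- A biconnected graph contains a cycle. -/
lemma exists_cycle (hG : Biconnected G) :
    ∃ (v : V) (c : G.Walk v v), c.IsCycle := by
  classical
  have : Nonempty V := by
    have hcard := hG.1
    rcases Nat.card_pos_iff.mp (show 0 < Nat.card V by omega) with ⟨h, _⟩
    exact h
  obtain ⟨u⟩ := this
  obtain ⟨v, w, huv, huw, hvw⟩ := two_neighbors hG u
  obtain ⟨p, hp, hpu⟩ := path_avoiding hG (v := v) (z := w) huv.ne' huw.ne'
  refine ⟨u, Walk.cons huv (p.concat huw.symm), ?_⟩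
  rw [Walk.cons_isCycle_iff]
  constructor
  · rw [Walk.isPath_def, Walk.support_concat]
    refine List.Nodup.append hp.support_nodup (List.nodup_singleton u) ?_
    intro a ha hb
    rw [List.mem_singleton] at hb
    exact hpu a ha hb
  · rw [Walk.edges_concat, List.concat_eq_append, List.mem_append,
      List.mem_singleton]
    rintro (hmem | hmem)
    · exact hpu u (p.fst_mem_support_of_mem_edges hmem) rfl
    · rw [Sym2.eq_iff] at hmem
      rcases hmem with ⟨rfl, hvu⟩ | ⟨_, rfl⟩
      · exact huw.ne' rfl
      · exact hvw rfl

lemma exists_fin_last {n : ℕ} (Q : Fin (n + 1) → Prop) :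
    (∃ i, Q i) ↔ (∃ i : Fin n, Q i.castSucc) ∨ Q (Fin.last n) := by
  constructor
  · rintro ⟨i, h⟩
    induction i using Fin.lastCases with
    | last => exact .inr h
    | cast i => exact .inl ⟨i, h⟩
  · rintro (⟨i, h⟩ | h)
    · exact ⟨_, h⟩
    · exact ⟨_, h⟩

/-- A partial (open) ear decomposition. -/
structure PED (G : SimpleGraph V) where
  k : ℕ
  v0 : V
  C : G.Walk v0 v0
  hC : C.IsCycle
  a : Fin k → V
  b : Fin k → V
  P : (i : Fin k) → G.Walk (a i) (b i)
  hP : ∀ i, (P i).IsPath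
  hopen : ∀ i, a i ≠ b i
  ha : ∀ i : Fin k, a i ∈ C.support ∨ ∃ j : Fin k, j < i ∧ a i ∈ (P j).support
  hb : ∀ i : Fin k, b i ∈ C.support ∨ ∃ j : Fin k, j < i ∧ b i ∈ (P j).support
  hnew : ∀ i : Fin k, ∀ w ∈ (P i).support, w ≠ a i → w ≠ b i →
      w ∉ C.support ∧ ∀ j : Fin k, j < i → w ∉ (P j).support
  hdisjC : ∀ i : Fin k, ∀ e ∈ (P i).edges, e ∉ C.edges
  hdisjP : ∀ i j : Fin k, i ≠ j → ∀ e ∈ (P i).edges, e ∉ (P j).edges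

namespace PED

/-- The vertices used so far. -/
def S (D : PED G) : Set V := {v | v ∈ D.C.support ∨ ∃ i, v ∈ (D.P i).support}

/-- The edges used so far. -/
def ES (D : PED G) : Set (Sym2 V) := {e | e ∈ D.C.edges ∨ ∃ i, e ∈ (D.P i).edges}

lemma mem_S {D : PED G} {v : V} :
    v ∈ D.S ↔ v ∈ D.C.support ∨ ∃ i, v ∈ (D.P i).support := Iff.rfl

lemma mem_ES {D : PED G} {e : Sym2 V} :
    e ∈ D.ES ↔ e ∈ D.C.edges ∨ ∃ i, e ∈ (D.P i).edges := Iff.rfl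

lemma ES_sub (D : PED G) : D.ES ⊆ G.edgeSet := by
  rintro e (h | ⟨i, h⟩)
  · exact D.C.edges_subset_edgeSet h
  · exact (D.P i).edges_subset_edgeSet h

lemma endpoint_mem (D : PED G) {x y : V} (h : s(x, y) ∈ D.ES) : x ∈ D.S := by
  rcases h with h | ⟨i, h⟩
  · exact .inl (D.C.fst_mem_support_of_mem_edges h)
  · exact .inr ⟨i, (D.P i).fst_mem_support_of_mem_edges h⟩

lemma pair (D : PED G) : ∃ x y : V, x ∈ D.S ∧ y ∈ D.S ∧ x ≠ y := by
  have h : ∃ z ∈ D.C.support, z ≠ D.v0 := by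
    have hC := D.hC
    rcases hcase : D.C with _ | ⟨h, q⟩
    · rw [hcase] at hC; exact absurd hC (Walk.IsCycle.not_of_nil)
    · exact ⟨_, by
        rw [Walk.support_cons]
        exact List.mem_cons_of_mem _ q.start_mem_support, h.ne'⟩
  obtain ⟨z, hz, hzv⟩ := h
  exact ⟨z, D.v0, .inl hz, .inl D.C.start_mem_support, hzv⟩

/-- Append a new open ear to a partial ear decomposition. -/
def snocEar (D : PED G) {x y : V} (p : G.Walk x y) (hxy : x ≠ y)
    (hxS : x ∈ D.S) (hyS : y ∈ D.S) (hp : p.IsPath)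
    (hint : ∀ v ∈ p.support, v ≠ x → v ≠ y → v ∉ D.S)
    (hed : ∀ e ∈ p.edges, e ∉ D.ES) : PED G where
  k := D.k + 1
  v0 := D.v0
  C := D.C
  hC := D.hC
  a := Fin.snoc D.a x
  b := Fin.snoc D.b y
  P := Fin.snoc
    (fun i => (D.P i).copy (by simp : Fin.snoc (α := fun _ => V) D.a x i.castSucc = D.a i).symm
      (by simp : Fin.snoc (α := fun _ => V) D.b y i.castSucc = D.b i).symm)
    (p.copy (by simp : Fin.snoc (α := fun _ => V) D.a x (Fin.last D.k) = x).symm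
      (by simp : Fin.snoc (α := fun _ => V) D.b y (Fin.last D.k) = y).symm)
  hP := by
    intro i
    induction i using Fin.lastCases with
    | last => simpa [Fin.snoc_last] using hp
    | cast i => simpa [Fin.snoc_castSucc] using D.hP i
  hopen := by
    intro i
    induction i using Fin.lastCases with
    | last => simpa [Fin.snoc_last] using hxy
    | cast i => simpa [Fin.snoc_castSucc] using D.hopen i
  ha := by
    intro i
    induction i using Fin.lastCases with
    | last =>
      simp only [Fin.snoc_last]
      rcases hxS with h | ⟨i0, h⟩
      · exact .inl h
      · refine .inr ⟨i0.castSucc, Fin.castSucc_lt_last i0, ?_⟩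
        simpa [Fin.snoc_castSucc] using h
    | cast i =>
      simp only [Fin.snoc_castSucc]
      rcases D.ha i with h | ⟨j, hj, h⟩
      · exact .inl h
      · refine .inr ⟨j.castSucc, by simpa [Fin.castSucc_lt_castSucc_iff] using hj, ?_⟩
        simpa [Fin.snoc_castSucc] using h
  hb := by
    intro i
    induction i using Fin.lastCases with
    | last =>
      simp only [Fin.snoc_last]
      rcases hyS with h | ⟨i0, h⟩
      · exact .inl h
      · refine .inr ⟨i0.castSucc, Fin.castSucc_lt_last i0, ?_⟩
        simpa [Fin.snoc_castSucc] using h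
    | cast i =>
      simp only [Fin.snoc_castSucc]
      rcases D.hb i with h | ⟨j, hj, h⟩
      · exact .inl h
      · refine .inr ⟨j.castSucc, by simpa [Fin.castSucc_lt_castSucc_iff] using hj, ?_⟩
        simpa [Fin.snoc_castSucc] using h
  hnew := by
    intro i
    induction i using Fin.lastCases with
    | last =>
      simp only [Fin.snoc_last, Walk.support_copy]
      intro w hw hw1 hw2
      have hwS : w ∉ D.S := hint w hw hw1 hw2
      constructor
      · exact fun hc => hwS (.inl hc)
      · intro j hj
        induction j using Fin.lastCases with
        | last => exact absurd hj (lt_irrefl _)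
        | cast j =>
          simp only [Fin.snoc_castSucc, Walk.support_copy]
          exact fun hc => hwS (.inr ⟨j, hc⟩)
    | cast i =>
      simp only [Fin.snoc_castSucc, Walk.support_copy]
      intro w hw hw1 hw2
      refine ⟨(D.hnew i w hw hw1 hw2).1, ?_⟩
      intro j hj
      induction j using Fin.lastCases with
      | last =>
        exfalso
        rw [Fin.lt_def] at hj
        simp only [Fin.val_last, Fin.coe_castSucc] at hj
        omega
      | cast j =>
        simp only [Fin.snoc_castSucc, Walk.support_copy]
        exact (D.hnew i w hw hw1 hw2).2 j
          (by simpa [Fin.castSucc_lt_castSucc_iff] using hj)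
  hdisjC := by
    intro i
    induction i using Fin.lastCases with
    | last =>
      simp only [Fin.snoc_last, Walk.edges_copy]
      exact fun e he hc => hed e he (.inl hc)
    | cast i => simpa [Fin.snoc_castSucc] using D.hdisjC i
  hdisjP := by
    intro i j hij
    induction i using Fin.lastCases with
    | last =>
      induction j using Fin.lastCases with
      | last => exact absurd rfl hij
      | cast j =>
        simp only [Fin.snoc_last, Fin.snoc_castSucc, Walk.edges_copy]
        exact fun e he hc => hed e he (.inr ⟨j, hc⟩)
    | cast i =>
      induction j using Fin.lastCases with
      | last =>
        simp only [Fin.snoc_last, Fin.snoc_castSucc, Walk.edges_copy]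
        exact fun e he hc => hed e hc (.inr ⟨i, he⟩)
      | cast j =>
        simp only [Fin.snoc_castSucc, Walk.edges_copy]
        exact D.hdisjP i j (fun h => hij (by rw [h]))

lemma snocEar_ES (D : PED G) {x y : V} (p : G.Walk x y) (hxy : x ≠ y)
    (hxS : x ∈ D.S) (hyS : y ∈ D.S) (hp : p.IsPath)
    (hint : ∀ v ∈ p.support, v ≠ x → v ≠ y → v ∉ D.S)
    (hed : ∀ e ∈ p.edges, e ∉ D.ES) (e : Sym2 V) :
    e ∈ (D.snocEar p hxy hxS hyS hp hint hed).ES ↔ e ∈ D.ES ∨ e ∈ p.edges := by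
  rw [mem_ES, mem_ES]
  simp only [snocEar]
  constructor
  · rintro (h | ⟨i, h⟩)
    · exact .inl (.inl h)
    · induction i using Fin.lastCases with
      | last => exact .inr (by simpa [Fin.snoc_last, Walk.edges_copy] using h)
      | cast i =>
        exact .inl (.inr ⟨i, by simpa [Fin.snoc_castSucc, Walk.edges_copy] using h⟩)
  · rintro ((h | ⟨i, h⟩) | h)
    · exact .inl h
    · exact .inr ⟨i.castSucc, by simpa [Fin.snoc_castSucc, Walk.edges_copy] using h⟩
    · exact .inr ⟨Fin.last _, by simpa [Fin.snoc_last, Walk.edges_copy] using h⟩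

lemma snocEar_P (D : PED G) {x y : V} (p : G.Walk x y) (hxy : x ≠ y)
    (hxS : x ∈ D.S) (hyS : y ∈ D.S) (hp : p.IsPath)
    (hint : ∀ v ∈ p.support, v ≠ x → v ≠ y → v ∉ D.S)
    (hed : ∀ e ∈ p.edges, e ∉ D.ES)
    (i : Fin (D.snocEar p hxy hxS hyS hp hint hed).k) (h : (i : ℕ) < D.k) :
    ((D.snocEar p hxy hxS hyS hp hint hed).P i).edges = (D.P ⟨i, h⟩).edges := by
  calc ((D.snocEar p hxy hxS hyS hp hint hed).P i).edges
      = ((D.snocEar p hxy hxS hyS hp hint hed).P (Fin.castSucc ⟨(i : ℕ), h⟩)).edges := rfl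
    _ = (D.P ⟨(i : ℕ), h⟩).edges := by
        simp only [snocEar, Fin.snoc_castSucc, Walk.edges_copy]

lemma grow [Finite V] (hG : Biconnected G) :
    ∀ (n : ℕ) (D : PED G), (G.edgeSet \ D.ES).ncard ≤ n →
      ∃ D' : PED G, G.edgeSet ⊆ D'.ES ∧ D.k ≤ D'.k ∧ D'.C.edges = D.C.edges ∧
        ∀ (i : Fin D'.k) (h : (i : ℕ) < D.k), (D'.P i).edges = (D.P ⟨i, h⟩).edges := by
  intro n
  induction n with
  | zero =>
    intro D hle
    have hsub : G.edgeSet ⊆ D.ES := by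
      intro e he
      by_contra hmem
      have hmm : e ∈ G.edgeSet \ D.ES := ⟨he, hmem⟩
      have h0 : (G.edgeSet \ D.ES).ncard = 0 := Nat.le_zero.1 hle
      rw [Set.ncard_eq_zero (Set.toFinite _)] at h0
      rw [h0] at hmm
      exact hmm
    exact ⟨D, hsub, le_refl _, rfl, fun i h => by
      rw [show (⟨(i : ℕ), h⟩ : Fin D.k) = i from Fin.ext rfl]⟩
  | succ n ih =>
    intro D hle
    by_cases hsub : G.edgeSet ⊆ D.ES
    · exact ⟨D, hsub, le_refl _, rfl, fun i h => by
        rw [show (⟨(i : ℕ), h⟩ : Fin D.k) = i from Fin.ext rfl]⟩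
    · obtain ⟨e, he, hne⟩ := Set.not_subset.mp hsub
      obtain ⟨x, y, p, hxy, hxS, hyS, hp, hint, hed⟩ :=
        exists_ear hG D.S D.ES D.ES_sub (fun x y h => D.endpoint_mem h) D.pair he hne
      have hES1 := snocEar_ES D p hxy hxS hyS hp hint hed
      obtain ⟨e0, he0⟩ : ∃ e0, e0 ∈ p.edges := by
        cases p with
        | nil => exact absurd rfl hxy
        | cons h q => exact ⟨_, List.mem_cons_self⟩
      have hmono : G.edgeSet \ (D.snocEar p hxy hxS hyS hp hint hed).ES ⊂
          G.edgeSet \ D.ES := by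
        constructor
        · rintro e' ⟨h1, h2⟩
          exact ⟨h1, fun hc => h2 ((hES1 e').2 (.inl hc))⟩
        · intro hcc
          have hmm : e0 ∈ G.edgeSet \ D.ES := ⟨p.edges_subset_edgeSet he0, hed e0 he0⟩
          exact (hcc hmm).2 ((hES1 e0).2 (.inr he0))
      have hlt := Set.ncard_lt_ncard hmono (Set.toFinite _)
      obtain ⟨D', h1, h2, h3, h4⟩ :=
        ih (D.snocEar p hxy hxS hyS hp hint hed) (by omega)
      refine ⟨D', h1, le_trans (Nat.le_succ _) h2, h3, ?_⟩
      intro i h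
      have hk : (i : ℕ) < (D.snocEar p hxy hxS hyS hp hint hed).k := by
        have : (D.snocEar p hxy hxS hyS hp hint hed).k = D.k + 1 := rfl
        omega
      rw [h4 i hk]
      exact snocEar_P D p hxy hxS hyS hp hint hed ⟨(i : ℕ), hk⟩ h

/-- Transport a partial ear decomposition along an injective graph homomorphism. -/
def map {W : Type*} {G' : SimpleGraph W} (f : G' →g G) (hf : Function.Injective f)
    (D : PED G') : PED G where
  k := D.k
  v0 := f D.v0
  C := D.C.map f
  hC := D.hC.map hf
  a := fun i => f (D.a i)
  b := fun i => f (D.b i)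
  P := fun i => (D.P i).map f
  hP := fun i => Walk.map_isPath_of_injective hf (D.hP i)
  hopen := fun i h => D.hopen i (hf h)
  ha := by
    intro i
    rcases D.ha i with h | ⟨j, hj, h⟩
    · exact .inl (by rw [Walk.support_map]; exact List.mem_map_of_mem h)
    · exact .inr ⟨j, hj, by rw [Walk.support_map]; exact List.mem_map_of_mem h⟩
  hb := by
    intro i
    rcases D.hb i with h | ⟨j, hj, h⟩
    · exact .inl (by rw [Walk.support_map]; exact List.mem_map_of_mem h)
    · exact .inr ⟨j, hj, by rw [Walk.support_map]; exact List.mem_map_of_mem h⟩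
  hnew := by
    intro i w hw hw1 hw2
    rw [Walk.support_map, List.mem_map] at hw
    obtain ⟨w0, hw0, rfl⟩ := hw
    have h1 : w0 ≠ D.a i := fun h => hw1 (by rw [h])
    have h2 : w0 ≠ D.b i := fun h => hw2 (by rw [h])
    obtain ⟨hc, hpp⟩ := D.hnew i w0 hw0 h1 h2
    constructor
    · rw [Walk.support_map, List.mem_map]
      rintro ⟨c0, hc0, hEq⟩
      exact hc (hf hEq ▸ hc0)
    · intro j hj
      rw [Walk.support_map, List.mem_map]
      rintro ⟨c0, hc0, hEq⟩
      exact hpp j hj (hf hEq ▸ hc0)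
  hdisjC := by
    intro i e he hc
    rw [Walk.edges_map, List.mem_map] at he hc
    obtain ⟨e0, he0, rfl⟩ := he
    obtain ⟨e1, he1, hEq⟩ := hc
    exact D.hdisjC i e0 he0 ((Sym2.map.injective hf hEq) ▸ he1)
  hdisjP := by
    intro i j hij e he hc
    rw [Walk.edges_map, List.mem_map] at he hc
    obtain ⟨e0, he0, rfl⟩ := he
    obtain ⟨e1, he1, hEq⟩ := hc
    exact D.hdisjP i j hij e0 he0 ((Sym2.map.injective hf hEq) ▸ he1)

lemma map_ES {W : Type*} {G' : SimpleGraph W} (f : G' →g G) (hf : Function.Injective f)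
    (D : PED G') (e : Sym2 V) :
    e ∈ (D.map f hf).ES ↔ ∃ e0 ∈ D.ES, Sym2.map f e0 = e := by
  rw [mem_ES]
  simp only [map, Walk.edges_map, List.mem_map]
  constructor
  · rintro (⟨e0, he0, rfl⟩ | ⟨i, e0, he0, rfl⟩)
    · exact ⟨e0, .inl he0, rfl⟩
    · exact ⟨e0, .inr ⟨i, he0⟩, rfl⟩
  · rintro ⟨e0, (he0 | ⟨i, he0⟩), rfl⟩
    · exact .inl ⟨e0, he0, rfl⟩
    · exact .inr ⟨i, e0, he0, rfl⟩

lemma map_k {W : Type*} {G' : SimpleGraph W} (f : G' →g G) (hf : Function.Injective f)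
    (D : PED G') : (D.map f hf).k = D.k := rfl

end PED

/-- A biconnected finite graph has a full partial ear decomposition. -/
lemma exists_full {W : Type*} [Finite W] {G' : SimpleGraph W}
    (hG' : Biconnected G') : ∃ D : PED G', G'.edgeSet ⊆ D.ES := by
  obtain ⟨v0, c, hc⟩ := exists_cycle hG'
  let D0 : PED G' :=
    { k := 0, v0 := v0, C := c, hC := hc,
      a := Fin.elim0, b := Fin.elim0, P := fun i => i.elim0,
      hP := fun i => i.elim0, hopen := fun i => i.elim0,
      ha := fun i => i.elim0, hb := fun i => i.elim0,
      hnew := fun i => i.elim0, hdisjC := fun i => i.elim0,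
      hdisjP := fun i => i.elim0 }
  obtain ⟨D, h1, _⟩ := PED.grow hG' (G'.edgeSet \ D0.ES).ncard D0 (le_refl _)
  exact ⟨D, h1⟩

end EarAux

end EarDev

/-- For any biconnected subgraph `H` of a biconnected graph `G`
there is an open ear decomposition of `G` of which `H` is the union of a prefix
of ears. -/
theorem stmt_1 (G : SimpleGraph V) (H : G.Subgraph)
    (hG : Biconnected G) (hH : Biconnected H.coe) :
    ∃ D : OpenEarDecomp G, ∃ j : ℕ, j ≤ D.k ∧
      ∀ e : Sym2 V, e ∈ H.edgeSet ↔
        (e ∈ D.C.edges ∨ ∃ i : Fin D.k, (i : ℕ) < j ∧ e ∈ (D.P i).edges) := by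
  classical
  have hfin : Finite V := by
    have h3 := hG.1
    rcases Nat.card_pos_iff.mp (show 0 < Nat.card V by omega) with ⟨_, h⟩
    exact h
  have hfinH : Finite H.verts := Subtype.finite
  -- full decomposition of H.coe
  obtain ⟨DH, hDHcov⟩ := EarAux.exists_full hH
  -- map it into G
  let D1 : EarAux.PED G := DH.map H.hom Subgraph.hom_injective
  have hD1 : ∀ e : Sym2 V, e ∈ D1.ES ↔ e ∈ H.edgeSet := by
    intro e
    rw [EarAux.PED.map_ES]
    constructor
    · rintro ⟨e0, he0, rfl⟩
      have he0' : e0 ∈ H.coe.edgeSet := DH.ES_sub he0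
      induction e0 using Sym2.ind with
      | _ a b =>
        have hadj : H.coe.Adj a b := (SimpleGraph.mem_edgeSet H.coe).1 he0'
        exact Subgraph.mem_edgeSet.2 (Subgraph.coe_adj_sub H a b hadj |> fun _ => by
          have := (Subgraph.coe_adj H a b) ▸ hadj
          exact this)
    · intro he
      induction e using Sym2.ind with
      | _ a b =>
        have hab : H.Adj a b := SimpleGraph.Subgraph.mem_edgeSet.1 he
        have ha' : a ∈ H.verts := hab.fst_mem
        have hb' : b ∈ H.verts := hab.snd_mem
        refine ⟨s(⟨a, ha'⟩, ⟨b, hb'⟩), hDHcov ?_, ?_⟩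
        · exact (SimpleGraph.mem_edgeSet H.coe).2 hab.coe
        · rfl
    -- extend to all of G
  obtain ⟨D', hcov, hk, hCe, hPe⟩ :=
    EarAux.PED.grow hG (G.edgeSet \ D1.ES).ncard D1 (le_refl _)
  refine ⟨⟨D'.k, D'.v0, D'.C, D'.hC, D'.a, D'.b, D'.P, D'.hP, D'.hopen, D'.ha,
      D'.hb, D'.hnew, D'.hdisjC, D'.hdisjP,
      fun e he => (EarAux.PED.mem_ES).1 (hcov he)⟩, D1.k, hk, ?_⟩
  intro e
  constructor
  · intro he
    rcases (hD1 e).2 he with h | ⟨i0, h⟩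
    · exact .inl (hCe ▸ h)
    · refine .inr ⟨⟨(i0 : ℕ), lt_of_lt_of_le i0.isLt hk⟩, i0.isLt, ?_⟩
      rw [hPe ⟨(i0 : ℕ), lt_of_lt_of_le i0.isLt hk⟩ i0.isLt]
      exact h
  · rintro (h | ⟨i, hij, h⟩)
    · exact (hD1 e).1 (.inl (hCe ▸ h))
    · rw [hPe i hij] at h
      exact (hD1 e).1 (.inr ⟨⟨(i : ℕ), hij⟩, h⟩)
end

section
/- Let H be a contracted minimal Q-triconnected graph with |Q| > 2. Then for any two terminals t_1, t_2 ∈ Q, there do not exist three parallel edges between t_1 and t_2 in H. -/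
universe u

variable {V : Type u}

/-- A loopless multigraph given by edge multiplicities. -/
structure MGraph (V : Type u) where
  m : Sym2 V → ℕ
  loopless : ∀ v : V, m s(v, v) = 0

/-- Adjacency in a multigraph. -/
def MGraph.Adj (G : MGraph V) (a b : V) : Prop := 0 < G.m s(a, b)

/-- A simple path from `x` to `y`, given as its list of vertices. -/
def MGraph.IsPathL (G : MGraph V) (x y : V) (l : List V) : Prop :=
  l.head? = some x ∧ l.getLast? = some y ∧ l.Nodup ∧ l.Chain' G.Adj

/-- The path (vertex list) `l` uses the edge `e`. -/
def usesEdge (l : List V) (e : Sym2 V) : Prop :=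
  ∃ p ∈ l.zip l.tail, s(p.1, p.2) = e

/-- There are `k` internally vertex-disjoint `x`-`y` paths, respecting edge
multiplicities (parallel edges may be used by distinct paths). -/
def MGraph.ConnKM (G : MGraph V) (k : ℕ) (x y : V) : Prop :=
  ∃ P : Fin k → List V, (∀ i, G.IsPathL x y (P i)) ∧
    (∀ i j, i ≠ j → ∀ v ∈ P i, v ∈ P j → v = x ∨ v = y) ∧
    ∀ e : Sym2 V, Nat.card {i : Fin k // usesEdge (P i) e} ≤ G.m e

open scoped Classical in
/-- Delete one copy of the edge `e`. -/
noncomputable def MGraph.delE (G : MGraph V) (e : Sym2 V) : MGraph V where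
  m f := if f = e then G.m f - 1 else G.m f
  loopless := by intro v; split <;> simp [G.loopless v]

open scoped Classical in
/-- Delete the vertex `v` (remove all edges at `v`). -/
noncomputable def MGraph.delV (G : MGraph V) (v : V) : MGraph V where
  m f := if v ∈ f then 0 else G.m f
  loopless := by intro w; split <;> simp [G.loopless w]

/-- `G` is `Q`-triconnected. -/
def MGraph.QTri (G : MGraph V) (Q : Set V) : Prop :=
  ∀ x ∈ Q, ∀ y ∈ Q, x ≠ y → G.ConnKM 3 x y

/-- `G` is minimally `Q`-triconnected: deleting any edge or vertex destroys
`Q`-triconnectivity. -/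
def MGraph.MinQTri (G : MGraph V) (Q : Set V) : Prop :=
  G.QTri Q ∧ (∀ e : Sym2 V, 0 < G.m e → ¬ (G.delE e).QTri Q) ∧
    ∀ v : V, ¬ (G.delV v).QTri Q

/-- The degree of a vertex, counting multiplicities. -/
noncomputable def MGraph.deg [Fintype V] (G : MGraph V) (v : V) : ℕ :=
  ∑ u : V, G.m s(v, u)

section Aux

variable {V : Type u}

lemma mem_of_mem_zip_tail {l : List V} {pr : V × V} (h : pr ∈ l.zip l.tail) :
    pr.1 ∈ l ∧ pr.2 ∈ l := by
  obtain ⟨a, b⟩ := pr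
  obtain ⟨h1, h2⟩ := List.of_mem_zip h
  exact ⟨h1, List.mem_of_mem_tail h2⟩

lemma chain'_rel_of_mem_zip {R : V → V → Prop} :
    ∀ {l : List V}, l.Chain' R → ∀ pr ∈ l.zip l.tail, R pr.1 pr.2 := by
  intro l
  induction l with
  | nil => intro _ pr h; simp at h
  | cons a l ih =>
    intro hc pr hpr
    cases l with
    | nil => simp at hpr
    | cons b l' =>
      have hc := List.isChain_cons_cons.mp hc
      simp only [List.tail_cons, List.zip_cons_cons, List.mem_cons] at hpr
      rcases hpr with rfl | hpr
      · exact hc.1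
      · exact ih hc.2 pr hpr

lemma natCard_le_of_subset {Φ : Fin 3 → Prop} {S : Finset (Fin 3)}
    (h : ∀ i, Φ i → i ∈ S) : Nat.card {i // Φ i} ≤ S.card := by
  have h1 : Nat.card {i // Φ i} ≤ Nat.card {i : Fin 3 // i ∈ S} :=
    Nat.card_le_card_of_injective (fun x => ⟨x.1, h x.1 x.2⟩)
      (fun a b hab => by
        cases a; cases b
        simpa using hab)
  simpa using h1

lemma exists_path_avoid {G : MGraph V} {a b : V} (h : G.ConnKM 3 a b)
    {c : V} (hca : c ≠ a) (hcb : c ≠ b) :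
    ∃ l, G.IsPathL a b l ∧ c ∉ l := by
  obtain ⟨P, hP, hdisj, _⟩ := h
  by_contra hcon
  push_neg at hcon
  have h0 : c ∈ P 0 := hcon (P 0) (hP 0)
  have h1 : c ∈ P 1 := hcon (P 1) (hP 1)
  rcases hdisj 0 1 (by decide) c h0 h1 with rfl | rfl
  · exact hca rfl
  · exact hcb rfl

lemma mem_of_usesEdge {l : List V} {a b : V} (h : usesEdge l s(a, b)) :
    a ∈ l ∧ b ∈ l := by
  obtain ⟨⟨p1, p2⟩, hpr, he⟩ := h
  obtain ⟨h1, h2⟩ := mem_of_mem_zip_tail hpr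
  rw [Sym2.eq_iff] at he
  rcases he with ⟨rfl, rfl⟩ | ⟨rfl, rfl⟩
  · exact ⟨h1, h2⟩
  · exact ⟨h2, h1⟩

lemma getLast?_append_right {l₁ l₂ : List V} (h : l₂ ≠ []) :
    (l₁ ++ l₂).getLast? = l₂.getLast? := by
  rw [List.getLast?_append]
  cases h2 : l₂.getLast? with
  | none => exact absurd (List.getLast?_eq_none_iff.mp h2) h
  | some b => rfl

lemma glue_aux {G : MGraph V} (B : List V) (hBnd : B.Nodup) (hBc : B.Chain' G.Adj) :
    ∀ A : List V, A.Chain' G.Adj → A.Nodup → (∃ v ∈ A, v ∈ B) →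
      ∃ p : List V, p ≠ [] ∧ p.head? = A.head? ∧ p.getLast? = B.getLast? ∧
        p.Nodup ∧ p.Chain' G.Adj ∧
        (∀ v ∈ p, v ∈ A ∨ v ∈ B) ∧
        (∀ pr ∈ p.zip p.tail, (pr.1 ∈ A ∧ pr.2 ∈ A) ∨ (pr.1 ∈ B ∧ pr.2 ∈ B)) := by
  intro A
  induction A with
  | nil => rintro _ _ ⟨v, hv, -⟩; simp at hv
  | cons a A' ih =>
    intro hc hnd hex
    by_cases haB : a ∈ B
    · obtain ⟨B₁, B₂, hBeq⟩ := List.append_of_mem haB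
      have hsuf : (a :: B₂) <:+ B := ⟨B₁, hBeq.symm⟩
      have hsub := hsuf.sublist
      refine ⟨a :: B₂, by simp, by simp, ?_, hBnd.sublist hsub, hBc.suffix hsuf,
        fun v hv => Or.inr (hsub.subset hv), fun pr hpr => ?_⟩
      · rw [hBeq]; exact (getLast?_append_right (by simp)).symm
      · obtain ⟨h1, h2⟩ := mem_of_mem_zip_tail hpr
        exact Or.inr ⟨hsub.subset h1, hsub.subset h2⟩
    · obtain ⟨v, hvA, hvB⟩ := hex
      have hvA' : v ∈ A' := by
        rcases List.mem_cons.mp hvA with rfl | h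
        · exact absurd hvB haB
        · exact h
      obtain ⟨hnd1, hnd2⟩ := List.nodup_cons.mp hnd
      obtain ⟨hc1, hc2⟩ := List.isChain_cons.mp hc
      obtain ⟨p', hp'ne, hp'h, hp'l, hp'nd, hp'c, hp'mem, hp'pr⟩ :=
        ih hc2 hnd2 ⟨v, hvA', hvB⟩
      have hanp : a ∉ p' := by
        intro ha
        rcases hp'mem a ha with h | h
        · exact hnd1 h
        · exact haB h
      refine ⟨a :: p', by simp, by simp, ?_, List.nodup_cons.mpr ⟨hanp, hp'nd⟩,
        List.isChain_cons.mpr ⟨fun y hy => hc1 y (hp'h ▸ hy), hp'c⟩, ?_, ?_⟩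
      · cases p' with
        | nil => exact absurd rfl hp'ne
        | cons c p'' => rw [List.getLast?_cons_cons]; exact hp'l
      · intro w hw
        rcases List.mem_cons.mp hw with rfl | hw'
        · exact Or.inl List.mem_cons_self
        · rcases hp'mem w hw' with h | h
          · exact Or.inl (List.mem_cons_of_mem _ h)
          · exact Or.inr h
      · intro pr hpr
        cases p' with
        | nil => exact absurd rfl hp'ne
        | cons c p'' =>
          simp only [List.tail_cons, List.zip_cons_cons, List.mem_cons] at hpr
          rcases hpr with rfl | hpr
          · have hcA' : c ∈ A' :=
              List.mem_of_mem_head? (by rw [hp'h.symm]; rfl)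
            exact Or.inl ⟨List.mem_cons_self, List.mem_cons_of_mem _ hcA'⟩
          · rcases hp'pr pr hpr with ⟨h1, h2⟩ | h
            · exact Or.inl ⟨List.mem_cons_of_mem _ h1, List.mem_cons_of_mem _ h2⟩
            · exact Or.inr h

lemma exists_path_avoiding_edge {G : MGraph V} {x y t3 : V}
    (hA : ∃ A, G.IsPathL x t3 A ∧ y ∉ A) (hB : ∃ B, G.IsPathL t3 y B ∧ x ∉ B) :
    ∃ p, G.IsPathL x y p ∧ ¬ usesEdge p s(x, y) := by
  obtain ⟨A, ⟨hAh, hAl, hAnd, hAc⟩, hyA⟩ := hA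
  obtain ⟨B, ⟨hBh, hBl, hBnd, hBc⟩, hxB⟩ := hB
  have ht3A : t3 ∈ A := List.mem_of_getLast? hAl
  have ht3B : t3 ∈ B := List.mem_of_mem_head? (by rw [hBh]; rfl)
  obtain ⟨p, hpne, hph, hpl, hpnd, hpc, hpmem, hppr⟩ :=
    glue_aux B hBnd hBc A hAc hAnd ⟨t3, ht3A, ht3B⟩
  refine ⟨p, ⟨by rw [hph, hAh], by rw [hpl, hBl], hpnd, hpc⟩, ?_⟩
  rintro ⟨⟨p1, p2⟩, hpr, he⟩
  rw [Sym2.eq_iff] at he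
  rcases hppr _ hpr with ⟨h1, h2⟩ | ⟨h1, h2⟩
  · rcases he with ⟨rfl, rfl⟩ | ⟨rfl, rfl⟩
    · exact hyA h2
    · exact hyA h1
  · rcases he with ⟨rfl, rfl⟩ | ⟨rfl, rfl⟩
    · exact hxB h1
    · exact hxB h2

lemma delE_m_ne {G : MGraph V} {e f : Sym2 V} (h : f ≠ e) : (G.delE e).m f = G.m f := by
  simp [MGraph.delE, h]

lemma delE_m_eq {G : MGraph V} {e : Sym2 V} : (G.delE e).m e = G.m e - 1 := by
  simp [MGraph.delE]

lemma delE_adj {G : MGraph V} {e : Sym2 V} (he : 2 ≤ G.m e) {a b : V}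
    (h : G.Adj a b) : (G.delE e).Adj a b := by
  by_cases hab : s(a, b) = e
  · show 0 < (G.delE e).m s(a, b)
    rw [hab, delE_m_eq]
    omega
  · show 0 < (G.delE e).m s(a, b)
    rw [delE_m_ne hab]
    exact h

lemma delE_isPath {G : MGraph V} {e : Sym2 V} (he : 2 ≤ G.m e) {x y : V} {l : List V}
    (h : G.IsPathL x y l) : (G.delE e).IsPathL x y l :=
  ⟨h.1, h.2.1, h.2.2.1, h.2.2.2.imp fun {a b} hab => delE_adj he hab⟩

lemma pos_of_usesEdge {G : MGraph V} {l : List V} (hc : l.Chain' G.Adj) {e : Sym2 V}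
    (h : usesEdge l e) : 0 < G.m e := by
  obtain ⟨pr, hpr, he⟩ := h
  have h2 := chain'_rel_of_mem_zip hc pr hpr
  simpa [MGraph.Adj, he] using h2

lemma usesEdge_pair {x y : V} {f : Sym2 V} : usesEdge [x, y] f ↔ s(x, y) = f := by
  simp [usesEdge]

end Aux

/-- In a contracted minimal `Q`-triconnected multigraph with more
than two terminals, no two terminals are joined by three parallel edges. -/
theorem stmt_4 [Fintype V] (H : MGraph V) (Q : Set V)
    (hmin : H.MinQTri Q) (hcontracted : ∀ v : V, H.deg v ≠ 2)
    (hQ : 2 < Q.ncard) :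
    ∀ t1 ∈ Q, ∀ t2 ∈ Q, H.m s(t1, t2) < 3 := by
  intro t1 ht1 t2 ht2
  by_contra h3
  push_neg at h3
  have ht12 : t1 ≠ t2 := by
    rintro rfl
    rw [H.loopless] at h3
    omega
  obtain ⟨t3, ht3Q, ht3a, ht3b⟩ : ∃ t3 ∈ Q, t3 ≠ t1 ∧ t3 ≠ t2 := by
    by_contra hcon
    push_neg at hcon
    have hsub : Q ⊆ {t1, t2} := by
      intro q hq
      by_cases h1 : q = t1
      · exact Set.mem_insert_iff.mpr (Or.inl h1)
      · exact Set.mem_insert_iff.mpr (Or.inr (hcon q hq h1))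
    have hle := Set.ncard_le_ncard hsub ((Set.finite_singleton t2).insert t1)
    have h2 : ({t1, t2} : Set V).ncard ≤ 2 := by
      have h4 := Set.ncard_insert_le t1 ({t2} : Set V)
      simp only [Set.ncard_singleton] at h4
      omega
    omega
  have hQtri' : (H.delE s(t1, t2)).QTri Q := by
    intro x hx y hy hxy
    by_cases hcase : s(x, y) = s(t1, t2)
    · -- the pair {x, y} coincides with {t1, t2}
      have ht3x : t3 ≠ x := by
        rcases Sym2.eq_iff.mp hcase with ⟨rfl, rfl⟩ | ⟨rfl, rfl⟩
        · exact ht3a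
        · exact ht3b
      have ht3y : t3 ≠ y := by
        rcases Sym2.eq_iff.mp hcase with ⟨rfl, rfl⟩ | ⟨rfl, rfl⟩
        · exact ht3b
        · exact ht3a
      have hA := exists_path_avoid (hmin.1 x hx t3 ht3Q (fun h => ht3x h.symm))
        hxy.symm ht3y.symm
      have hB := exists_path_avoid (hmin.1 t3 ht3Q y hy ht3y) ht3x.symm hxy
      obtain ⟨p, hp, hpuse⟩ := exists_path_avoiding_edge hA hB
      have hm2 : 2 ≤ H.m s(x, y) := by rw [hcase]; omega
      have hxyP : (H.delE s(t1, t2)).IsPathL x y [x, y] := by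
        refine ⟨rfl, rfl, by simp [hxy], ?_⟩
        simp only [List.Chain', List.isChain_cons_cons, List.isChain_singleton, and_true]
        exact delE_adj (by omega) (show (0 : ℕ) < H.m s(x, y) by omega)
      have hpuse' : ¬ usesEdge p s(t1, t2) := by rw [← hcase]; exact hpuse
      refine ⟨![[x, y], [x, y], p], ?_, ?_, ?_⟩
      · intro i
        fin_cases i
        · exact hxyP
        · exact hxyP
        · exact delE_isPath (by omega) hp
      · intro i j hij v hvi hvj
        have key : ∀ w, w ∈ ([x, y] : List V) → w = x ∨ w = y := by
          intro w hw; simpa using hw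
        fin_cases i <;> fin_cases j <;>
          first
            | exact absurd rfl hij
            | exact key v hvi
            | exact key v hvj
      · intro f
        by_cases hf : f = s(t1, t2)
        · subst hf
          rw [delE_m_eq]
          refine le_trans (natCard_le_of_subset (S := ({0, 1} : Finset (Fin 3))) ?_) ?_
          · intro i hi
            fin_cases i
            · decide
            · decide
            · exact absurd hi hpuse'
          · have hcard : ({0, 1} : Finset (Fin 3)).card = 2 := by decide
            omega
        · rw [delE_m_ne hf]
          by_cases hu : usesEdge p f
          · have hpos := pos_of_usesEdge hp.2.2.2 hu
            refine le_trans (natCard_le_of_subset (S := ({2} : Finset (Fin 3))) ?_) ?_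
            · intro i hi
              fin_cases i
              · exact absurd ((usesEdge_pair.mp hi).symm.trans hcase) hf
              · exact absurd ((usesEdge_pair.mp hi).symm.trans hcase) hf
              · decide
            · have hcard : ({2} : Finset (Fin 3)).card = 1 := by decide
              omega
          · refine le_trans (natCard_le_of_subset (S := (∅ : Finset (Fin 3))) ?_) ?_
            · intro i hi
              fin_cases i
              · exact absurd ((usesEdge_pair.mp hi).symm.trans hcase) hf
              · exact absurd ((usesEdge_pair.mp hi).symm.trans hcase) hf
              · exact absurd hi hu
            · simp
    · -- generic pair: reuse the three paths of H
      obtain ⟨P, hP, hdisj, hcount⟩ := hmin.1 x hx y hy hxy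
      refine ⟨P, fun i => delE_isPath (by omega) (hP i), hdisj, ?_⟩
      intro f
      by_cases hf : f = s(t1, t2)
      · subst hf
        have hex : ∃ i0 : Fin 3, ¬ usesEdge (P i0) s(t1, t2) := by
          by_contra hcon
          push_neg at hcon
          obtain ⟨h10, h20⟩ := mem_of_usesEdge (hcon 0)
          obtain ⟨h11, h21⟩ := mem_of_usesEdge (hcon 1)
          have e1 := hdisj 0 1 (by decide) t1 h10 h11
          have e2 := hdisj 0 1 (by decide) t2 h20 h21
          apply hcase
          rcases e1 with rfl | rfl <;> rcases e2 with rfl | rfl <;>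
            first
              | exact absurd rfl ht12
              | rfl
              | exact Sym2.eq_swap
      
        obtain ⟨i0, hi0⟩ := hex
        rw [delE_m_eq]
        refine le_trans (natCard_le_of_subset (S := Finset.univ.erase i0)
          (fun i hi => Finset.mem_erase.mpr ⟨fun h => hi0 (h ▸ hi), Finset.mem_univ i⟩)) ?_
        have hcard : (Finset.univ.erase i0).card = 2 := by
          rw [Finset.card_erase_of_mem (Finset.mem_univ i0)]
          simp
        omega
      · rw [delE_m_ne hf]
        exact hcount f
  exact hmin.2.1 s(t1, t2) (by omega) hQtri'
end

section
/- Let H be a contracted minimal Q-triconnected graph with |Q| > 3. Then H is a simple graph (no loops and no parallel edges). -/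
universe u

variable {V : Type u}

/-! ### Auxiliary infrastructure for the proof -/

section Aux

open List

/-- Ordered consecutive pairs of a list. -/
def pairs (l : List V) : List (V × V) := l.zip l.tail

@[simp] lemma pairs_nil : pairs ([] : List V) = [] := rfl

@[simp] lemma pairs_singleton (a : V) : pairs [a] = [] := rfl

@[simp] lemma pairs_cons_cons (a b : V) (t : List V) :
    pairs (a :: b :: t) = (a, b) :: pairs (b :: t) := rfl

lemma usesEdge_iff {l : List V} {e : Sym2 V} :
    usesEdge l e ↔ ∃ pr ∈ pairs l, s(pr.1, pr.2) = e := Iff.rfl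

lemma chain'_iff_pairs {R : V → V → Prop} : ∀ {l : List V},
    l.Chain' R ↔ ∀ pr ∈ pairs l, R pr.1 pr.2
  | [] => by simp [List.Chain']
  | [a] => by simp [List.Chain']
  | a :: b :: t => by
    rw [show (a :: b :: t).Chain' R ↔ R a b ∧ (b :: t).Chain' R from List.isChain_cons_cons, chain'_iff_pairs (l := b :: t)]
    simp only [pairs_cons_cons, List.mem_cons]
    constructor
    · rintro ⟨h1, h2⟩ pr (rfl | h) <;> [exact h1; exact h2 _ h]
    · intro h; exact ⟨h _ (Or.inl rfl), fun pr hpr => h _ (Or.inr hpr)⟩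

lemma mem_of_mem_pairs {pr : V × V} : ∀ {l : List V},
    pr ∈ pairs l → pr.1 ∈ l ∧ pr.2 ∈ l
  | [] , h => by simp at h
  | [a], h => by simp at h
  | a :: b :: t, h => by
    rcases List.mem_cons.mp h with rfl | h
    · exact ⟨List.mem_cons_self, List.mem_cons_of_mem _ (List.mem_cons_self)⟩
    · have := mem_of_mem_pairs (l := b :: t) h
      exact ⟨List.mem_cons_of_mem _ this.1, List.mem_cons_of_mem _ this.2⟩

lemma mem_pairs_of_mem {u : V} : ∀ {l : List V}, 2 ≤ l.length → u ∈ l →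
    ∃ pr ∈ pairs l, u = pr.1 ∨ u = pr.2
  | [], h, _ => by simp at h
  | [a], h, _ => by simp at h
  | a :: b :: t, _, hu => by
    rcases List.mem_cons.mp hu with rfl | hu
    · exact ⟨(u, b), List.mem_cons_self, Or.inl rfl⟩
    · rcases t.eq_nil_or_concat with rfl | _
      · simp at hu; subst hu
        exact ⟨(a, u), List.mem_cons_self, Or.inr rfl⟩
      · have hlen : 2 ≤ (b :: t).length := by
          simp [List.length_cons]
          rcases t with _ | ⟨c, t⟩
          · rename_i h'; rcases h' with ⟨_, _, h'⟩; simp at h'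
          · simp
        obtain ⟨pr, hpr, h⟩ := mem_pairs_of_mem (l := b :: t) hlen hu
        exact ⟨pr, List.mem_cons_of_mem _ hpr, h⟩

lemma pairs_append : ∀ (xs : List V) (ys : List V) (hx : xs ≠ []) (hy : ys ≠ []),
    pairs (xs ++ ys) = pairs xs ++ (xs.getLast hx, ys.head hy) :: pairs ys
  | [], _, hx, _ => absurd rfl hx
  | [a], c :: t, _, _ => by simp [pairs]
  | a :: b :: t, c :: u, _, _ => by
    have := pairs_append (b :: t) (c :: u) (by simp) (by simp)
    simp only [List.cons_append] at this ⊢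
    rw [pairs_cons_cons, this]
    simp [List.getLast_cons]

lemma pairs_prefix {xs l : List V} (h : xs <+: l) {pr : V × V} (hpr : pr ∈ pairs xs) :
    pr ∈ pairs l := by
  obtain ⟨r, rfl⟩ := h
  rcases eq_or_ne xs [] with rfl | hx
  · simp at hpr
  rcases eq_or_ne r [] with rfl | hr
  · simpa using hpr
  rw [pairs_append xs r hx hr]
  exact List.mem_append_left _ hpr

lemma pairs_suffix {xs l : List V} (h : xs <:+ l) {pr : V × V} (hpr : pr ∈ pairs xs) :
    pr ∈ pairs l := by
  obtain ⟨r, rfl⟩ := h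
  rcases eq_or_ne xs [] with rfl | hx
  · simp at hpr
  rcases eq_or_ne r [] with rfl | hr
  · simpa using hpr
  rw [pairs_append r xs hr hx]
  exact List.mem_append_right _ (List.mem_cons_of_mem _ hpr)

lemma pairs_tail_subset (a : V) (t : List V) {pr : V × V} (hpr : pr ∈ pairs t) :
    pr ∈ pairs (a :: t) := pairs_suffix ⟨[a], rfl⟩ hpr

/-- A walk from `x` to `y` (not necessarily simple). -/
def MGraph.IsWalk (G : MGraph V) (x y : V) (l : List V) : Prop :=
  l.head? = some x ∧ l.getLast? = some y ∧ l.Chain' G.Adj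

namespace MGraph

variable {G : MGraph V} {x y : V} {l : List V}

lemma IsPathL.isWalk (h : G.IsPathL x y l) : G.IsWalk x y l := ⟨h.1, h.2.1, h.2.2.2⟩

lemma IsWalk.ne_nil (h : G.IsWalk x y l) : l ≠ [] := by
  rintro rfl; simp [MGraph.IsWalk] at h

lemma IsWalk.left_mem (h : G.IsWalk x y l) : x ∈ l :=
  List.mem_of_mem_head? h.1

lemma IsWalk.right_mem (h : G.IsWalk x y l) : y ∈ l :=
  List.mem_of_mem_getLast? h.2.1

lemma IsPathL.ne_nil (h : G.IsPathL x y l) : l ≠ [] := h.isWalk.ne_nil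

lemma IsPathL.left_mem (h : G.IsPathL x y l) : x ∈ l := h.isWalk.left_mem

lemma IsPathL.right_mem (h : G.IsPathL x y l) : y ∈ l := h.isWalk.right_mem

lemma adj_symm {u v : V} (h : G.Adj u v) : G.Adj v u := by
  unfold MGraph.Adj at h ⊢; rwa [Sym2.eq_swap]

lemma isPathL_singleton (a : V) : G.IsPathL a a [a] := by
  refine ⟨rfl, rfl, by simp, by simp [List.Chain']⟩

lemma isPathL_pair {a b : V} (hab : a ≠ b) (h : G.Adj a b) : G.IsPathL a b [a, b] := by
  refine ⟨rfl, rfl, by simp [hab], by simp [h, List.Chain']⟩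

end MGraph

lemma exists_dup_split : ∀ {l : List V}, ¬ l.Nodup →
    ∃ (v : V) (l₁ l₂ l₃ : List V), l = l₁ ++ v :: l₂ ++ v :: l₃
  | [], h => absurd List.nodup_nil h
  | a :: t, h => by
    by_cases ha : a ∈ t
    · obtain ⟨s, r, rfl⟩ := List.append_of_mem ha
      exact ⟨a, [], s, r, by simp⟩
    · have hnt : ¬ t.Nodup := fun hn => h (List.nodup_cons.mpr ⟨ha, hn⟩)
      obtain ⟨v, l₁, l₂, l₃, rfl⟩ := exists_dup_split hnt
      exact ⟨v, a :: l₁, l₂, l₃, by simp⟩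

lemma walk_to_path_aux {G : MGraph V} {x y : V} :
    ∀ (n : ℕ) (l : List V), l.length ≤ n → G.IsWalk x y l →
    ∃ l', G.IsPathL x y l' ∧ (∀ u ∈ l', u ∈ l) ∧ (∀ pr ∈ pairs l', pr ∈ pairs l) := by
  intro n
  induction n with
  | zero =>
    intro l hlen hw
    exact absurd (List.length_eq_zero_iff.mp (Nat.le_zero.mp hlen)) hw.ne_nil
  | succ n IH =>
    intro l hlen hw
    by_cases hnd : l.Nodup
    · exact ⟨l, ⟨hw.1, hw.2.1, hnd, hw.2.2⟩, fun u hu => hu, fun pr hpr => hpr⟩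
    obtain ⟨v, l₁, l₂, l₃, rfl⟩ := exists_dup_split hnd
    set L : List V := l₁ ++ v :: l₂ ++ v :: l₃ with hL
    have hLeq : L = l₁ ++ v :: l₂ ++ v :: l₃ := rfl
    set l' : List V := l₁ ++ v :: l₃ with hl'
    have hlen' : l'.length ≤ n := by
      simp only [hl', hL, List.length_append, List.length_cons] at hlen ⊢
      omega
    have hpre : (l₁ ++ [v]) <+: L := ⟨l₂ ++ v :: l₃, by simp [hL]⟩
    have hsuf : (v :: l₃) <:+ L := ⟨l₁ ++ v :: l₂, by simp [hL]⟩
    have hmem : ∀ u ∈ l', u ∈ L := by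
      intro u hu; simp only [hl', List.mem_append, List.mem_cons] at hu
      simp only [hL, List.mem_append, List.mem_cons]; tauto
    have hpairs : ∀ pr ∈ pairs l', pr ∈ pairs L := by
      intro pr hpr
      rcases eq_or_ne l₃ [] with rfl | h3
      · exact pairs_prefix hpre (by simpa [hl'] using hpr)
      · have hsplit : l' = (l₁ ++ [v]) ++ l₃ := by simp [hl']
        rw [hsplit, pairs_append _ _ (by simp) h3] at hpr
        rcases List.mem_append.mp hpr with hp | hp
        · exact pairs_prefix hpre hp
        · rcases List.mem_cons.mp hp with rfl | hp
          · have hj : ((l₁ ++ [v]).getLast (by simp), l₃.head h3) ∈ pairs (v :: l₃) := by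
              rcases l₃ with _ | ⟨c, t⟩
              · exact absurd rfl h3
              · simp [pairs]
            exact pairs_suffix hsuf hj
          · exact pairs_suffix hsuf (pairs_tail_subset _ _ hp)
    have hw' : G.IsWalk x y l' := by
      refine ⟨?_, ?_, ?_⟩
      · have := hw.1
        rcases l₁ with _ | ⟨c, t⟩ <;> simpa [hl', hL] using this
      · have h1 : l'.getLast? = (v :: l₃).getLast? := by
          rw [hl']; exact List.getLast?_append_of_ne_nil _ (List.cons_ne_nil _ _)
        have h2 : L.getLast? = (v :: l₃).getLast? := by
          obtain ⟨s, hs⟩ := hsuf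
          rw [← hs]; exact List.getLast?_append_of_ne_nil _ (List.cons_ne_nil _ _)
        rw [h1, ← h2]; exact hw.2.1
      · rw [chain'_iff_pairs]
        intro pr hpr
        exact (chain'_iff_pairs.mp hw.2.2) pr (hpairs pr hpr)
    obtain ⟨l'', hp'', hm'', hpr''⟩ := IH l' hlen' hw'
    exact ⟨l'', hp'', fun u hu => hmem u (hm'' u hu),
      fun pr hpr => hpairs pr (hpr'' pr hpr)⟩

lemma MGraph.IsWalk.exists_path {G : MGraph V} {x y : V} {l : List V} (h : G.IsWalk x y l) :
    ∃ l', G.IsPathL x y l' ∧ (∀ u ∈ l', u ∈ l) ∧ (∀ pr ∈ pairs l', pr ∈ pairs l) :=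
  walk_to_path_aux l.length l le_rfl h

lemma pairs_reverse : ∀ (l : List V), pairs l.reverse = (pairs l).reverse.map Prod.swap
  | [] => rfl
  | [a] => rfl
  | a :: b :: t => by
    have h1 : (a :: b :: t).reverse = (b :: t).reverse ++ [a] := by simp
    rw [h1, pairs_append _ _ (by simp) (by simp), pairs_reverse (b :: t)]
    have h2 : ((b :: t).reverse.getLast (by simp)) = b := by
      rw [List.getLast_reverse]; rfl
    simp [h2]

lemma mem_pairs_reverse {l : List V} {pr : V × V} :
    pr ∈ pairs l.reverse ↔ (pr.2, pr.1) ∈ pairs l := by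
  rw [pairs_reverse]
  constructor
  · intro h
    rcases List.mem_map.mp h with ⟨q, hq, rfl⟩
    rw [List.mem_reverse] at hq
    simpa using hq
  · intro h
    exact List.mem_map.mpr ⟨(pr.2, pr.1), List.mem_reverse.mpr h, by simp⟩

namespace MGraph

variable {G : MGraph V} {a b x y : V} {l l₁ l₂ : List V}

lemma IsPathL.reverse (h : G.IsPathL x y l) : G.IsPathL y x l.reverse := by
  refine ⟨?_, ?_, by simpa using h.2.2.1, ?_⟩
  · rw [List.head?_reverse]; exact h.2.1
  · rw [List.getLast?_reverse]; exact h.1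
  · show l.reverse.IsChain G.Adj; rw [List.isChain_reverse]
    exact h.2.2.2.imp fun {u v} huv => MGraph.adj_symm huv

lemma IsPathL.split (hl : G.IsPathL a b l) (hd : l = l₁ ++ x :: l₂) :
    G.IsPathL a x (l₁ ++ [x]) ∧ G.IsPathL x b (x :: l₂) ∧ x ∉ l₁ ∧ x ∉ l₂ ∧
    (∀ pr ∈ pairs (l₁ ++ [x]), pr ∈ pairs l) ∧ (∀ pr ∈ pairs (x :: l₂), pr ∈ pairs l) := by
  subst hd
  obtain ⟨hhead, hlast, hnd, hch⟩ := hl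
  rw [List.nodup_append] at hnd
  obtain ⟨hnd1, hnd2, hdisj⟩ := hnd
  have hxl1 : x ∉ l₁ := fun hx => hdisj x hx x (List.mem_cons_self) rfl
  have hxl2 : x ∉ l₂ := (List.nodup_cons.mp hnd2).1
  have hpre : (l₁ ++ [x]) <+: (l₁ ++ x :: l₂) := ⟨l₂, by simp⟩
  have hsuf : (x :: l₂) <:+ (l₁ ++ x :: l₂) := ⟨l₁, rfl⟩
  have hp1 : ∀ pr ∈ pairs (l₁ ++ [x]), pr ∈ pairs (l₁ ++ x :: l₂) :=
    fun pr hpr => pairs_prefix hpre hpr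
  have hp2 : ∀ pr ∈ pairs (x :: l₂), pr ∈ pairs (l₁ ++ x :: l₂) :=
    fun pr hpr => pairs_suffix hsuf hpr
  have hch' := chain'_iff_pairs.mp hch
  refine ⟨⟨?_, by simp, ?_, ?_⟩, ⟨rfl, ?_, hnd2, ?_⟩, hxl1, hxl2, hp1, hp2⟩
  · rcases l₁ with _ | ⟨c, t⟩ <;> simpa using hhead
  · refine hnd1.append (by simp) ?_
    intro u hu hu'
    rw [List.mem_singleton] at hu'
    subst hu'
    exact hxl1 hu
  · exact chain'_iff_pairs.mpr fun pr hpr => hch' pr (hp1 pr hpr)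
  · rw [List.getLast?_append_of_ne_nil _ (List.cons_ne_nil _ _)] at hlast; exact hlast
  · exact chain'_iff_pairs.mpr fun pr hpr => hch' pr (hp2 pr hpr)

lemma IsPathL.head_cons (h : G.IsPathL x y l) : l = x :: l.tail := by
  rcases l with _ | ⟨c, t⟩
  · exact absurd rfl h.ne_nil
  · have := h.1; simp at this; simp [this]

lemma IsPathL.concat_walk (h₁ : G.IsPathL a x l₁) (h₂ : G.IsPathL x b l₂) :
    G.IsWalk a b (l₁ ++ l₂.tail) ∧ (∀ u ∈ l₁ ++ l₂.tail, u ∈ l₁ ∨ u ∈ l₂) ∧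
    (∀ pr ∈ pairs (l₁ ++ l₂.tail), pr ∈ pairs l₁ ∨ pr ∈ pairs l₂) := by
  have hl2 := h₂.head_cons
  rcases ht : l₂.tail with _ | ⟨c, t'⟩
  · have hxb : x = b := by
      have := h₂.2.1
      rw [hl2, ht] at this; simpa using this
    subst hxb
    refine ⟨by simpa using h₁.isWalk, by simp +contextual, by simp +contextual⟩
  · have hgl : l₁.getLast? = some x := h₁.2.1
    have hl₁ne : l₁ ≠ [] := h₁.ne_nil
    have hpairs : ∀ pr ∈ pairs (l₁ ++ c :: t'), pr ∈ pairs l₁ ∨ pr ∈ pairs l₂ := by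
      intro pr hpr
      rw [pairs_append _ _ hl₁ne (List.cons_ne_nil _ _)] at hpr
      rcases List.mem_append.mp hpr with hp | hp
      · exact Or.inl hp
      · rcases List.mem_cons.mp hp with rfl | hp
        · right
          have hglx : l₁.getLast hl₁ne = x := by
            have := List.getLast?_eq_getLast hl₁ne
            rw [this] at hgl; injection hgl
          rw [hl2, ht]
          simp [hglx, pairs]
        · exact Or.inr (by rw [hl2, ht]; exact pairs_tail_subset _ _ hp)
    rw [← ht]
    refine ⟨⟨?_, ?_, ?_⟩, ?_, by rw [ht]; exact hpairs⟩
    · rcases l₁ with _ | ⟨d, s⟩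
      · exact absurd rfl hl₁ne
      · simpa using h₁.1
    · rw [ht, List.getLast?_append_of_ne_nil _ (List.cons_ne_nil _ _)]
      have := h₂.2.1
      rw [hl2, ht] at this
      simpa using this
    · rw [chain'_iff_pairs]
      intro pr hpr
      rcases hpairs pr (by rw [← ht]; exact hpr) with h | h
      · exact chain'_iff_pairs.mp h₁.2.2.2 pr h
      · exact chain'_iff_pairs.mp h₂.2.2.2 pr h
    · intro u hu
      rcases List.mem_append.mp hu with h | h
      · exact Or.inl h
      · exact Or.inr (by rw [hl2]; exact List.mem_cons_of_mem _ h)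

lemma IsPathL.concat (h₁ : G.IsPathL a x l₁) (h₂ : G.IsPathL x b l₂)
    (hdisj : ∀ u ∈ l₁, u ∈ l₂ → u = x) : G.IsPathL a b (l₁ ++ l₂.tail) := by
  obtain ⟨hw, _, _⟩ := h₁.concat_walk h₂
  refine ⟨hw.1, hw.2.1, ?_, hw.2.2⟩
  rw [List.nodup_append]
  refine ⟨h₁.2.2.1, (List.nodup_cons.mp (h₂.head_cons ▸ h₂.2.2.1)).2, ?_⟩
  intro u hu u' hu' huu'
  subst huu'
  have hx : u = x := hdisj u hu (by rw [h₂.head_cons]; exact List.mem_cons_of_mem _ hu')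
  subst hx
  exact (List.nodup_cons.mp (h₂.head_cons ▸ h₂.2.2.1)).1 hu'

lemma IsPathL.concat_edge (h₁ : G.IsPathL a x l₁) (h₂ : G.IsPathL y b l₂)
    (hadj : G.Adj x y) (hdisj : ∀ u ∈ l₁, u ∉ l₂) : G.IsPathL a b (l₁ ++ l₂) := by
  refine ⟨?_, ?_, ?_, ?_⟩
  · rcases l₁ with _ | ⟨d, s⟩
    · exact absurd rfl h₁.ne_nil
    · simpa using h₁.1
  · rw [List.getLast?_append_of_ne_nil _ h₂.ne_nil]; exact h₂.2.1
  · exact h₁.2.2.1.append h₂.2.2.1 hdisj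
  · show (l₁ ++ l₂).IsChain G.Adj; rw [List.isChain_append]
    refine ⟨h₁.2.2.2, h₂.2.2.2, ?_⟩
    intro u hu v' hv'
    rw [h₁.2.1] at hu
    rw [h₂.1] at hv'
    cases hu; cases hv'; exact hadj

lemma IsPathL.mono {G' : MGraph V} (hle : ∀ e, G.m e ≤ G'.m e) (h : G.IsPathL a b l) :
    G'.IsPathL a b l :=
  ⟨h.1, h.2.1, h.2.2.1, h.2.2.2.imp fun {u v} huv => lt_of_lt_of_le huv (hle _)⟩

end MGraph

lemma pair_split {u v : V} : ∀ {l : List V}, (u, v) ∈ pairs l →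
    ∃ l₁ l₂, l = l₁ ++ u :: v :: l₂
  | [], h => by simp at h
  | [a], h => by simp at h
  | a :: b :: t, h => by
    rcases List.mem_cons.mp h with h | h
    · obtain ⟨rfl, rfl⟩ : u = a ∧ v = b := by simpa [Prod.ext_iff] using h
      exact ⟨[], t, rfl⟩
    · obtain ⟨l₁, l₂, hE⟩ := pair_split (l := b :: t) h
      exact ⟨a :: l₁, l₂, by simp [hE]⟩

open scoped Classical in
/-- Set the multiplicity of edge `e` to zero. -/
noncomputable def MGraph.zeroE (G : MGraph V) (e : Sym2 V) : MGraph V where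
  m f := if f = e then 0 else G.m f
  loopless := by intro v; split <;> simp [G.loopless v]

open scoped Classical in
/-- The induced sub-multigraph on a vertex set. -/
noncomputable def MGraph.ind (G : MGraph V) (S : Set V) : MGraph V where
  m f := if ∀ x ∈ f, x ∈ S then G.m f else 0
  loopless := by intro v; split <;> simp [G.loopless v]

open scoped Classical in
/-- Add one copy of edge `u v` (if `u ≠ v`). -/
noncomputable def MGraph.addE (G : MGraph V) (u v : V) : MGraph V where
  m f := if u ≠ v ∧ f = s(u, v) then G.m f + 1 else G.m f
  loopless := by
    intro w
    split
    · rename_i h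
      rcases h with ⟨huv, he⟩
      rw [Sym2.eq_iff] at he
      rcases he with ⟨h1, h2⟩ | ⟨h1, h2⟩ <;> exact absurd (h1 ▸ h2 ▸ rfl) huv
    · simp [G.loopless w]

/-- Total (doubled) edge count. -/
noncomputable def edgeSum [Fintype V] (G : MGraph V) : ℕ := ∑ p : V × V, G.m s(p.1, p.2)

lemma edgeSum_lt [Fintype V] {G G' : MGraph V} (hle : ∀ e, G'.m e ≤ G.m e)
    {f : Sym2 V} (hf : G'.m f < G.m f) : edgeSum G' < edgeSum G := by
  induction f using Sym2.ind with
  | _ u v => exact Finset.sum_lt_sum (fun p _ => hle _) ⟨(u, v), Finset.mem_univ _, hf⟩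

lemma edgeSum_add_card_le [Fintype V] (G G' : MGraph V) (hle : ∀ e, G'.m e ≤ G.m e)
    (T : Finset (V × V)) (hT : ∀ p ∈ T, G'.m s(p.1, p.2) = 0 ∧ 1 ≤ G.m s(p.1, p.2)) :
    edgeSum G' + T.card ≤ edgeSum G := by
  classical
  rw [edgeSum, edgeSum, ← Finset.sum_sdiff (Finset.subset_univ T),
    ← Finset.sum_sdiff (Finset.subset_univ T)]
  have e1 : ∑ p ∈ T, G'.m s(p.1, p.2) = 0 := Finset.sum_eq_zero fun p hp => (hT p hp).1
  have e2 : T.card ≤ ∑ p ∈ T, G.m s(p.1, p.2) := by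
    rw [Finset.card_eq_sum_ones]; exact Finset.sum_le_sum fun p hp => (hT p hp).2
  have e3 : ∑ p ∈ Finset.univ \ T, G'.m s(p.1, p.2) ≤
      ∑ p ∈ Finset.univ \ T, G.m s(p.1, p.2) := Finset.sum_le_sum fun p _ => hle _
  omega

/-- The set of vertices reachable from `a` by a path avoiding `w` and `q`. -/
def MGraph.Side (G : MGraph V) (a w q : V) : Set V :=
  {u | ∃ l, G.IsPathL a u l ∧ w ∉ l ∧ q ∉ l}

namespace MGraph

variable {G : MGraph V} {a b x y z u v w p q : V} {l : List V} {S : Set V}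

lemma IsPathL.eq_singleton (h : G.IsPathL x x l) : l = [x] := by
  have hc := h.head_cons
  rcases ht : l.tail with _ | ⟨c, t'⟩
  · rw [hc, ht]
  · exfalso
    have hlast := h.2.1
    have hnd := h.2.2.1
    rw [hc, ht] at hlast hnd
    have : (x :: c :: t').getLast? = (c :: t').getLast? := List.getLast?_cons_cons ..
    rw [this] at hlast
    have hx : x ∈ c :: t' := List.mem_of_mem_getLast? hlast
    exact (List.nodup_cons.mp hnd).1 hx

lemma IsPathL.prefix_avoid (h : G.IsPathL a z l) (hx : x ∈ l) (hxz : x ≠ z) :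
    ∃ π, G.IsPathL a x π ∧ (∀ u ∈ π, u ∈ l) ∧ z ∉ π := by
  obtain ⟨c₁, c₂, rfl⟩ := List.append_of_mem hx
  obtain ⟨hpre, hsuf, _, _, _, _⟩ := h.split rfl
  refine ⟨c₁ ++ [x], hpre, ?_, ?_⟩
  · intro u hu
    rcases List.mem_append.mp hu with h' | h'
    · exact List.mem_append_left _ h'
    · simp at h'; subst h'; exact List.mem_append_right _ (List.mem_cons_self)
  · intro hz
    have hz_suf : z ∈ x :: c₂ := hsuf.right_mem
    rcases List.mem_append.mp hz with h' | h'
    · have hnd := h.2.2.1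
      rw [List.nodup_append] at hnd
      exact hnd.2.2 _ h' _ hz_suf rfl
    · simp at h'; exact hxz h'.symm

lemma mem_side_of_path (h : G.IsPathL a z l) (hw : w ∉ l) (hq : q ∉ l) :
    ∀ u ∈ l, u ∈ G.Side a w q := by
  intro u hu
  obtain ⟨c₁, c₂, rfl⟩ := List.append_of_mem hu
  obtain ⟨hpre, _, _, _, _, _⟩ := h.split rfl
  have hsub : ∀ x ∈ c₁ ++ [u], x ∈ c₁ ++ u :: c₂ := by
    intro x hx
    rcases List.mem_append.mp hx with h' | h'
    · exact List.mem_append_left _ h'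
    · simp at h'; subst h'; exact List.mem_append_right _ (List.mem_cons_self)
  exact ⟨c₁ ++ [u], hpre, fun h' => hw (hsub _ h'), fun h' => hq (hsub _ h')⟩

lemma self_mem_side (hwa : w ≠ a) (hqa : q ≠ a) : a ∈ G.Side a w q :=
  ⟨[a], isPathL_singleton a, by simpa using hwa, by simpa using hqa⟩

lemma not_target_mem_side : q ∉ G.Side a w q := by
  rintro ⟨l, h, _, hq⟩
  exact hq h.right_mem

lemma not_avoid_mem_side : w ∉ G.Side a w q := by
  rintro ⟨l, h, hw, _⟩
  exact hw h.right_mem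

lemma addE_m_ge (G : MGraph V) (u v : V) (g : Sym2 V) : G.m g ≤ (G.addE u v).m g := by
  simp only [MGraph.addE]; split <;> omega

lemma addE_m_self (G : MGraph V) (h : u ≠ v) : (G.addE u v).m s(u, v) = G.m s(u, v) + 1 := by
  simp only [MGraph.addE, if_pos (⟨h, rfl⟩ : u ≠ v ∧ s(u,v) = s(u,v))]

lemma addE_m_of_ne (G : MGraph V) {g : Sym2 V} (h : g ≠ s(u, v)) :
    (G.addE u v).m g = G.m g := by
  simp only [MGraph.addE]
  rw [if_neg]; rintro ⟨_, h'⟩; exact h h'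

lemma ind_m_le (G : MGraph V) (S : Set V) (g : Sym2 V) : (G.ind S).m g ≤ G.m g := by
  simp only [MGraph.ind]; split <;> omega

lemma ind_m_of_mem (G : MGraph V) {g : Sym2 V} (h : ∀ x ∈ g, x ∈ S) :
    (G.ind S).m g = G.m g := by
  simp only [MGraph.ind]; rw [if_pos h]

lemma ind_m_pos (G : MGraph V) {g : Sym2 V} (h : 0 < (G.ind S).m g) :
    (∀ x ∈ g, x ∈ S) ∧ 0 < G.m g := by
  by_cases h' : ∀ x ∈ g, x ∈ S
  · exact ⟨h', by rwa [ind_m_of_mem G h'] at h⟩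
  · exfalso; simp only [MGraph.ind] at h; rw [if_neg h'] at h; exact absurd h (by simp)

end MGraph

lemma edgeSum_addE_le [Fintype V] (G : MGraph V) (u v : V) :
    edgeSum (G.addE u v) ≤ edgeSum G + 2 := by
  classical
  unfold edgeSum
  have hb : ∀ p : V × V,
      (G.addE u v).m s(p.1, p.2) ≤ G.m s(p.1, p.2) + (if s(p.1, p.2) = s(u, v) then 1 else 0) := by
    intro p
    simp only [MGraph.addE]
    split_ifs with h1 h2
    · omega
    · exact absurd h1.2 h2
    · omega
    · omega
  calc ∑ p : V × V, (G.addE u v).m s(p.1, p.2)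
      ≤ ∑ p : V × V, (G.m s(p.1, p.2) + (if s(p.1, p.2) = s(u, v) then 1 else 0)) :=
        Finset.sum_le_sum fun p _ => hb p
    _ = (∑ p : V × V, G.m s(p.1, p.2)) +
        (∑ p : V × V, (if s(p.1, p.2) = s(u, v) then 1 else 0)) := Finset.sum_add_distrib
    _ ≤ (∑ p : V × V, G.m s(p.1, p.2)) + 2 := by
        have h1 : (∑ p : V × V, (if s(p.1, p.2) = s(u, v) then 1 else 0)) =
            (Finset.univ.filter (fun p : V × V => s(p.1, p.2) = s(u, v))).card := by
          rw [← Finset.sum_filter, Finset.card_eq_sum_ones]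
        have h2 : (Finset.univ.filter (fun p : V × V => s(p.1, p.2) = s(u, v))) ⊆
            ({(u, v), (v, u)} : Finset (V × V)) := by
          intro p hp
          rw [Finset.mem_filter] at hp
          rcases Sym2.eq_iff.mp hp.2 with ⟨h3, h4⟩ | ⟨h3, h4⟩
          · simp [Prod.ext_iff, h3, h4]
          · simp [Prod.ext_iff, h3, h4]
        have h3 := Finset.card_le_card h2
        have h4 : ({(u, v), (v, u)} : Finset (V × V)).card ≤ 2 := by
          apply le_trans (Finset.card_insert_le _ _); simp
        omega

lemma no_pair_of_not_mem {l : List V} {p q : V} (hq : q ∉ l) :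
    ∀ pr ∈ pairs l, s(pr.1, pr.2) ≠ s(p, q) := by
  intro pr hpr h
  obtain ⟨h1, h2⟩ := mem_of_mem_pairs hpr
  rcases Sym2.eq_iff.mp h with ⟨_, e2⟩ | ⟨e1, _⟩
  · exact hq (e2 ▸ h2)
  · exact hq (e1 ▸ h1)

/-- Core contradiction: under the cut hypothesis, one cannot join a path from `a`
and a path from `b` avoiding `w` and the special pair. -/
lemma join_false {G : MGraph V} {a b w p q : V}
    (hcut : ∀ l, G.IsPathL a b l → w ∈ l ∨ ∃ pr ∈ pairs l, s(pr.1, pr.2) = s(p, q))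
    {u : V} {l₁ l₂ : List V} (h₁ : G.IsPathL a u l₁) (h₂ : G.IsPathL b u l₂)
    (hw₁ : w ∉ l₁) (hw₂ : w ∉ l₂)
    (hno₁ : q ∉ l₁ ∨ p ∉ l₁) (hno₂ : q ∉ l₂ ∨ p ∉ l₂) : False := by
  obtain ⟨hwalk, hmem, hpairs⟩ := h₁.concat_walk h₂.reverse
  obtain ⟨l', hp', hm', hpr'⟩ := hwalk.exists_path
  have hmem_pq : ∀ (l : List V), (q ∉ l ∨ p ∉ l) →
      ∀ pr ∈ pairs l, s(pr.1, pr.2) ≠ s(p, q) := by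
    intro l hno pr hpr h
    obtain ⟨hm1, hm2⟩ := mem_of_mem_pairs hpr
    rcases Sym2.eq_iff.mp h with ⟨e1, e2⟩ | ⟨e1, e2⟩ <;> rcases hno with hq | hp
    · exact hq (e2 ▸ hm2)
    · exact hp (e1 ▸ hm1)
    · exact hq (e1 ▸ hm1)
    · exact hp (e2 ▸ hm2)
  rcases hcut l' hp' with hwl | ⟨pr, hpr, heq⟩
  · rcases hmem _ (hm' _ hwl) with h | h
    · exact hw₁ h
    · exact hw₂ (by simpa using h)
  · rcases hpairs pr (hpr' pr hpr) with h | h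
    · exact hmem_pq l₁ hno₁ pr h heq
    · have h' := mem_pairs_reverse.mp h
      have heq' : s(pr.2, pr.1) = s(p, q) := by rwa [Sym2.eq_swap]
      exact hmem_pq l₂ hno₂ (pr.2, pr.1) h' heq'

/-- Two internally disjoint `a`-`b` paths exist. -/
def Good (G : MGraph V) (a b : V) : Prop :=
  ∃ l₁ l₂, G.IsPathL a b l₁ ∧ G.IsPathL a b l₂ ∧ ∀ x ∈ l₁, x ∈ l₂ → x = a ∨ x = b

/-- Hypotheses of the 2-vertex-Menger theorem. -/
def Hyp (G : MGraph V) (a b : V) : Prop :=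
  a ≠ b ∧ ¬ G.Adj a b ∧ (∃ l, G.IsPathL a b l) ∧
    ∀ v, v ≠ a → v ≠ b → ∃ l, G.IsPathL a b l ∧ v ∉ l

lemma side_fan [Fintype V] {N : ℕ}
    (IH : ∀ M, M < N → ∀ (G : MGraph V) (a b : V), edgeSum G ≤ M → Hyp G a b → Good G a b)
    (G : MGraph V) (a b w p q : V) (hGN : edgeSum G ≤ N)
    (hab : a ≠ b) (hnadj : ¬ G.Adj a b)
    (hex : ∃ l, G.IsPathL a b l)
    (hloc : ∀ v, v ≠ a → v ≠ b → ∃ l, G.IsPathL a b l ∧ v ∉ l)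
    (hwa : w ≠ a) (hwb : w ≠ b) (hpa : p ≠ a) (hpb : p ≠ b) (hqa : q ≠ a) (hqb : q ≠ b)
    (hpq : p ≠ q) (hwp : w ≠ p) (hwq : w ≠ q)
    (hcut : ∀ l, G.IsPathL a b l → w ∈ l ∨ ∃ pr ∈ pairs l, s(pr.1, pr.2) = s(p, q))
    (R : List V) (hR : G.IsPathL a b R) (hwR : w ∉ R) (hRpq : (p, q) ∈ pairs R) :
    ∃ Aw Ap, G.IsPathL a w Aw ∧ G.IsPathL a p Ap ∧
      (∀ x ∈ Aw, x ∈ Ap → x = a) ∧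
      (∀ x ∈ Aw, x ∈ G.Side a w q ∨ x = w) ∧ (∀ x ∈ Ap, x ∈ G.Side a w q) := by
  classical
  set S : Set V := G.Side a w q with hS
  -- decompose R at the pair (p, q)
  obtain ⟨r₁, r₂, hRd⟩ := pair_split hRpq
  obtain ⟨hRpre, hRsufp, hp_r₁, hp_qr₂, _, _⟩ := hR.split hRd
  have hRd2 : R = (r₁ ++ [p]) ++ q :: r₂ := by simpa using hRd
  obtain ⟨_, hRsufq, hq_r₁p, hq_r₂, _, _⟩ := hR.split hRd2
  have hsub1 : ∀ x ∈ r₁ ++ [p], x ∈ R := by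
    intro x hx; rw [hRd2]; exact List.mem_append_left _ hx
  have hsub2 : ∀ x ∈ q :: r₂, x ∈ R := by
    intro x hx; rw [hRd2]; exact List.mem_append_right _ hx
  have hwpre : w ∉ r₁ ++ [p] := fun h => hwR (hsub1 _ h)
  have hpS : p ∈ S := ⟨r₁ ++ [p], hRpre, hwpre, hq_r₁p⟩
  have hBq : G.IsPathL b q (q :: r₂).reverse := hRsufq.reverse
  have hwBq : w ∉ (q :: r₂).reverse := by
    rw [List.mem_reverse]; exact fun h => hwR (hsub2 _ h)
  have hpBq : p ∉ (q :: r₂).reverse := by rw [List.mem_reverse]; exact hp_qr₂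

  have hadj_pq : G.Adj p q := chain'_iff_pairs.mp hR.2.2.2 _ hRpq
  -- key contradiction: no a→q path avoiding w and p
  have keyq : ∀ l', G.IsPathL a q l' → w ∉ l' → p ∉ l' → False := by
    intro l' h hw hp
    exact join_false hcut h hBq hw hwBq (Or.inr hp) (Or.inr hpBq)
  -- sideification
  have sideify : ∀ z l, G.IsPathL a z l → q ∉ l → (∀ x ∈ l, x = w → z = w) →
      ∀ x ∈ l, x ∈ S ∨ x = z := by
    intro z l h hq hwcond x hx
    by_cases hxz : x = z
    · exact Or.inr hxz
    · obtain ⟨π, hπ, hsubπ, hzπ⟩ := h.prefix_avoid hx hxz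
      refine Or.inl ⟨π, hπ, ?_, fun h' => hq (hsubπ _ h')⟩
      intro hwπ
      have hzw := hwcond w (hsubπ _ hwπ) rfl
      exact hzπ (hzw ▸ hwπ)
  -- the main construction: for every u ∉ {a,b} an a-fan path avoiding u
  have main : ∀ u, u ≠ a → u ≠ b → ∃ z l, (z = w ∨ z = p) ∧ G.IsPathL a z l ∧
      u ∉ l ∧ q ∉ l ∧ (∀ x ∈ l, x ∈ S ∨ x = z) := by
    intro u hua hub
    by_cases huw : u = w
    · subst huw
      refine ⟨p, r₁ ++ [p], Or.inr rfl, hRpre, hwpre, hq_r₁p, ?_⟩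
      exact sideify p _ hRpre hq_r₁p (fun x hx hxw => absurd (hxw ▸ hx) hwpre)
    · obtain ⟨Ru, hRu, huRu⟩ := hloc u hua hub
      by_cases hpRu : p ∈ Ru
      · -- split Ru at p
        obtain ⟨c₁, c₂, hc⟩ := List.append_of_mem hpRu
        obtain ⟨hα, _, _, _, _, _⟩ := hRu.split hc
        have hαsub : ∀ x ∈ c₁ ++ [p], x ∈ Ru := by
          intro x hx; rw [hc]
          rcases List.mem_append.mp hx with h' | h'
          · exact List.mem_append_left _ h'
          · simp at h'; subst h'; exact List.mem_append_right _ (List.mem_cons_self)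
        by_cases hwα : w ∈ c₁ ++ [p]
        · -- w before p : use prefix to w
          obtain ⟨π, hπ, hπsub, hpπ⟩ := hα.prefix_avoid hwα hwp
          have hqπ : q ∉ π := by
            intro hqπ
            obtain ⟨π', hπ', hπ'sub, hwπ'⟩ := hπ.prefix_avoid hqπ hwq.symm
            exact keyq π' hπ' hwπ' (fun h' => hpπ (hπ'sub _ h'))
          refine ⟨w, π, Or.inl rfl, hπ, ?_, hqπ, ?_⟩
          · exact fun h' => huRu (hαsub _ (hπsub _ h'))
          · exact sideify w _ hπ hqπ (fun x _ _ => rfl)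
        · -- α avoids w : use α itself
          have hqα : q ∉ c₁ ++ [p] := by
            intro hqα
            obtain ⟨π', hπ', hπ'sub, hpπ'⟩ := hα.prefix_avoid hqα (Ne.symm hpq)
            exact keyq π' hπ' (fun h' => hwα (hπ'sub _ h')) hpπ'
          refine ⟨p, c₁ ++ [p], Or.inr rfl, hα, ?_, hqα, ?_⟩
          · exact fun h' => huRu (hαsub _ h')
          · exact sideify p _ hα hqα (fun x hx hxw => absurd (hxw ▸ hx) hwα)
      · -- p ∉ Ru : then w ∈ Ru
        have hwRu : w ∈ Ru := by
          rcases hcut Ru hRu with h | ⟨pr, hpr, heq⟩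
          · exact h
          · exfalso
            obtain ⟨hm1, hm2⟩ := mem_of_mem_pairs hpr
            rcases Sym2.eq_iff.mp heq with ⟨e1, _⟩ | ⟨_, e2⟩
            · exact hpRu (e1 ▸ hm1)
            · exact hpRu (e2 ▸ hm2)
        obtain ⟨c₁, c₂, hc⟩ := List.append_of_mem hwRu
        obtain ⟨hπ, _, _, _, _, _⟩ := hRu.split hc
        have hπsub : ∀ x ∈ c₁ ++ [w], x ∈ Ru := by
          intro x hx; rw [hc]
          rcases List.mem_append.mp hx with h' | h'
          · exact List.mem_append_left _ h'
          · simp at h'; subst h'; exact List.mem_append_right _ (List.mem_cons_self)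
        have hqπ : q ∉ c₁ ++ [w] := by
          intro hqπ
          obtain ⟨π', hπ', hπ'sub, hwπ'⟩ := hπ.prefix_avoid hqπ hwq.symm
          exact keyq π' hπ' hwπ' (fun h' => hpRu (hπsub _ (hπ'sub _ h')))
        refine ⟨w, c₁ ++ [w], Or.inl rfl, hπ, ?_, hqπ, ?_⟩
        · exact fun h' => huRu (hπsub _ h')
        · exact sideify w _ hπ hqπ (fun x _ _ => rfl)
  -- b is not on the a-side
  have hbS : b ∉ S := by
    rintro ⟨l, h, hw, hq⟩
    rcases hcut l h with h' | ⟨pr, hpr, heq⟩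
    · exact hw h'
    · obtain ⟨hm1, hm2⟩ := mem_of_mem_pairs hpr
      rcases Sym2.eq_iff.mp heq with ⟨_, e2⟩ | ⟨e1, _⟩
      · exact hq (e2 ▸ hm2)
      · exact hq (e1 ▸ hm1)
  have haS : a ∈ S := MGraph.self_mem_side hwa hqa
  -- the auxiliary graph GA
  set Gi := G.ind (S ∪ {w}) with hGi
  set GA := (Gi.addE w b).addE p b with hGAdef
  have hqSw : q ∉ S ∪ {w} := by
    rintro (h | h)
    · exact MGraph.not_target_mem_side h
    · have hq : q = w := by simpa using h
      exact hwq hq.symm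
  have hbSw : b ∉ S ∪ {w} := by
    rintro (h | h)
    · exact hbS h
    · have hb : b = w := by simpa using h
      exact hwb hb.symm
  have hswb_ne : s(w, b) ≠ s(p, b) := by
    intro hEq
    rcases Sym2.eq_iff.mp hEq with ⟨h, _⟩ | ⟨h, _⟩
    · exact hwp h
    · exact hwb h
  have hadj_wb : GA.Adj w b := by
    show 0 < GA.m s(w, b)
    have h1 : GA.m s(w, b) = (Gi.addE w b).m s(w, b) :=
      MGraph.addE_m_of_ne (Gi.addE w b) hswb_ne
    rw [h1, MGraph.addE_m_self Gi hwb]; omega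
  have hadj_pb : GA.Adj p b := by
    show 0 < GA.m s(p, b)
    rw [MGraph.addE_m_self (Gi.addE w b) hpb]; omega
  have hGA_ge : ∀ g, Gi.m g ≤ GA.m g := fun g =>
    le_trans (MGraph.addE_m_ge Gi w b g) (MGraph.addE_m_ge (Gi.addE w b) p b g)
  have hclassify : ∀ u v', GA.Adj u v' →
      (G.Adj u v' ∧ u ∈ S ∪ {w} ∧ v' ∈ S ∪ {w}) ∨ s(u, v') = s(w, b) ∨ s(u, v') = s(p, b) := by
    intro u v' h
    by_cases h1 : s(u, v') = s(p, b)
    · exact Or.inr (Or.inr h1)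
    by_cases h2 : s(u, v') = s(w, b)
    · exact Or.inr (Or.inl h2)
    left
    have h' : 0 < GA.m s(u, v') := h
    rw [MGraph.addE_m_of_ne (Gi.addE w b) h1, MGraph.addE_m_of_ne Gi h2] at h'
    obtain ⟨hall, hpos⟩ := MGraph.ind_m_pos G h'
    exact ⟨hpos, hall _ (Sym2.mem_mk_left _ _), hall _ (Sym2.mem_mk_right _ _)⟩
  have hSA : ∀ u v', G.Adj u v' → u ∈ S ∪ {w} → v' ∈ S ∪ {w} → GA.Adj u v' := by
    intro u v' h hu hv
    have hall : ∀ x ∈ s(u, v'), x ∈ S ∪ {w} := by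
      intro x hx; rcases Sym2.mem_iff.mp hx with rfl | rfl <;> assumption
    have h1 : Gi.m s(u, v') = G.m s(u, v') := MGraph.ind_m_of_mem G hall
    have h2 : 0 < Gi.m s(u, v') := by rw [h1]; exact h
    exact lt_of_lt_of_le h2 (hGA_ge _)
  have hnadjA : ¬ GA.Adj a b := by
    intro h
    rcases hclassify a b h with ⟨h', _, _⟩ | h' | h'
    · exact hnadj h'
    · rcases Sym2.eq_iff.mp h' with ⟨e1, _⟩ | ⟨e1, _⟩
      · exact hwa e1.symm
      · exact hab e1
    · rcases Sym2.eq_iff.mp h' with ⟨e1, _⟩ | ⟨e1, _⟩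
      · exact hpa e1.symm
      · exact hab e1
  -- converting fan paths into GA-paths
  have conv : ∀ z l, (z = w ∨ z = p) → G.IsPathL a z l → (∀ x ∈ l, x ∈ S ∨ x = z) →
      GA.IsPathL a b (l ++ [b]) := by
    intro z l hz hl hmem
    have hmem' : ∀ x ∈ l, x ∈ S ∪ {w} := by
      intro x hx
      rcases hmem x hx with h | h
      · exact Or.inl h
      · subst h
        rcases hz with rfl | rfl
        · exact Or.inr rfl
        · exact Or.inl hpS
    have hGAl : GA.IsPathL a z l := by
      refine ⟨hl.1, hl.2.1, hl.2.2.1, chain'_iff_pairs.mpr ?_⟩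
      intro pr hpr
      have hG := chain'_iff_pairs.mp hl.2.2.2 pr hpr
      obtain ⟨hm1, hm2⟩ := mem_of_mem_pairs hpr
      exact hSA _ _ hG (hmem' _ hm1) (hmem' _ hm2)
    have hbl : b ∉ l := fun h => hbSw (hmem' _ h)
    have hadj_zb : GA.Adj z b := by rcases hz with rfl | rfl; exacts [hadj_wb, hadj_pb]
    have hres := hGAl.concat_edge (MGraph.isPathL_singleton b) hadj_zb ?_
    · exact hres
    · intro u hu hub
      simp at hub; subst hub; exact hbl hu
  have hHypA : Hyp GA a b := by
    refine ⟨hab, hnadjA, ?_, ?_⟩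
    · obtain ⟨z, l, hz, hl, _, _, hmem⟩ := main p hpa hpb
      exact ⟨l ++ [b], conv z l hz hl hmem⟩
    · intro v hva hvb
      obtain ⟨z, l, hz, hl, hvl, _, hmem⟩ := main v hva hvb
      refine ⟨l ++ [b], conv z l hz hl hmem, ?_⟩
      intro hvm
      rcases List.mem_append.mp hvm with h | h
      · exact hvl h
      · simp at h; exact hvb h
  -- the edge count decreases
  have neighb : ∀ l, G.IsPathL a b l → ∃ y', y' ≠ b ∧ G.Adj y' b ∧ y' ∈ l := by
    intro l hl
    have hrev := hl.reverse
    have hc := hrev.head_cons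
    rcases ht : l.reverse.tail with _ | ⟨y', t'⟩
    · exfalso
      have h1 : l.reverse = [b] := by rw [hc, ht]
      have h2 := hrev.2.1
      rw [h1] at h2
      simp at h2
      exact hab h2.symm
    · have hch := hrev.2.2.2
      rw [hc, ht] at hch
      have hadj : G.Adj b y' := (List.isChain_cons_cons.mp hch).1
      have hnd := hrev.2.2.1
      rw [hc, ht] at hnd
      have hyb : y' ≠ b := by
        rintro rfl
        exact (List.nodup_cons.mp hnd).1 (List.mem_cons_self)
      have hymem : y' ∈ l := by
        rw [← List.mem_reverse, hc, ht]
        exact List.mem_cons_of_mem _ (List.mem_cons_self)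
      exact ⟨y', hyb, MGraph.adj_symm hadj, hymem⟩
  obtain ⟨l₀, hl₀⟩ := hex
  obtain ⟨y₁, hy₁b, hy₁adj, _⟩ := neighb l₀ hl₀
  have hy₁a : y₁ ≠ a := by rintro rfl; exact hnadj hy₁adj
  obtain ⟨l₁', hl₁', hy₁l⟩ := hloc y₁ hy₁a hy₁b
  obtain ⟨y₂, hy₂b, hy₂adj, hy₂mem⟩ := neighb l₁' hl₁'
  have hy12 : y₁ ≠ y₂ := fun h => hy₁l (h ▸ hy₂mem)
  set T : Finset (V × V) := {(p, q), (q, p), (y₁, b), (b, y₁), (y₂, b), (b, y₂)} with hT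
  have hTcard : T.card = 6 := by
    have n1 : ((p, q) : V × V) ∉ ({(q, p), (y₁, b), (b, y₁), (y₂, b), (b, y₂)} : Finset (V × V)) := by
      simp only [Finset.mem_insert, Finset.mem_singleton, Prod.mk.injEq]
      push_neg
      exact ⟨fun h => absurd h hpq, fun _ => hqb, fun h => absurd h hpb,
        fun _ => hqb, fun h => absurd h hpb⟩
    have n2 : ((q, p) : V × V) ∉ ({(y₁, b), (b, y₁), (y₂, b), (b, y₂)} : Finset (V × V)) := by
      simp only [Finset.mem_insert, Finset.mem_singleton, Prod.mk.injEq]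
      push_neg
      exact ⟨fun _ => hpb, fun h => absurd h hqb, fun _ => hpb, fun h => absurd h hqb⟩
    have n3 : ((y₁, b) : V × V) ∉ ({(b, y₁), (y₂, b), (b, y₂)} : Finset (V × V)) := by
      simp only [Finset.mem_insert, Finset.mem_singleton, Prod.mk.injEq]
      push_neg
      exact ⟨fun h => absurd h hy₁b, fun h => absurd h hy12, fun h => absurd h hy₁b⟩
    have n4 : ((b, y₁) : V × V) ∉ ({(y₂, b), (b, y₂)} : Finset (V × V)) := by
      simp only [Finset.mem_insert, Finset.mem_singleton, Prod.mk.injEq]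
      push_neg
      exact ⟨fun h => absurd h.symm hy₂b, fun _ => hy12⟩
    have n5 : ((y₂, b) : V × V) ∉ ({(b, y₂)} : Finset (V × V)) := by
      simp only [Finset.mem_singleton, Prod.mk.injEq]
      push_neg
      exact fun h => absurd h hy₂b
    rw [hT, Finset.card_insert_of_notMem n1, Finset.card_insert_of_notMem n2,
      Finset.card_insert_of_notMem n3, Finset.card_insert_of_notMem n4,
      Finset.card_insert_of_notMem n5, Finset.card_singleton]
  have hTprop : ∀ pr ∈ T, Gi.m s(pr.1, pr.2) = 0 ∧ 1 ≤ G.m s(pr.1, pr.2) := by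
    have hzero : ∀ g : Sym2 V, (¬ ∀ x ∈ g, x ∈ S ∪ {w}) → Gi.m g = 0 := by
      intro g hg
      by_contra h
      exact hg (MGraph.ind_m_pos G (Nat.pos_of_ne_zero h)).1
    have hq_zero : Gi.m s(p, q) = 0 :=
      hzero _ (fun h => hqSw (h q (Sym2.mem_mk_right _ _)))
    have hb1 : Gi.m s(y₁, b) = 0 :=
      hzero _ (fun h => hbSw (h b (Sym2.mem_mk_right _ _)))
    have hb2 : Gi.m s(y₂, b) = 0 :=
      hzero _ (fun h => hbSw (h b (Sym2.mem_mk_right _ _)))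
    intro pr hpr
    rw [hT] at hpr
    simp only [Finset.mem_insert, Finset.mem_singleton] at hpr
    rcases hpr with rfl | rfl | rfl | rfl | rfl | rfl
    · exact ⟨hq_zero, hadj_pq⟩
    · exact ⟨by rwa [Sym2.eq_swap], by rw [Sym2.eq_swap]; exact hadj_pq⟩
    · exact ⟨hb1, hy₁adj⟩
    · exact ⟨by rwa [Sym2.eq_swap], by rw [Sym2.eq_swap]; exact hy₁adj⟩
    · exact ⟨hb2, hy₂adj⟩
    · exact ⟨by rwa [Sym2.eq_swap], by rw [Sym2.eq_swap]; exact hy₂adj⟩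
  have hsum6 : edgeSum Gi + 6 ≤ edgeSum G := by
    have := edgeSum_add_card_le G Gi (fun g => MGraph.ind_m_le G _ g) T hTprop
    omega
  have hGAsum : edgeSum GA ≤ edgeSum Gi + 4 := by
    have h1 := edgeSum_addE_le Gi w b
    have h2 := edgeSum_addE_le (Gi.addE w b) p b
    rw [← hGAdef] at h2
    omega
  have hNlt : edgeSum GA < N := by omega
  obtain ⟨π₁, π₂, hπ₁, hπ₂, hππ⟩ := IH (edgeSum GA) hNlt GA a b le_rfl hHypA
  -- post-processing GA-paths into G-fan-paths
  have post : ∀ π, GA.IsPathL a b π → ∃ z σ, (z = w ∨ z = p) ∧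
      G.IsPathL a z σ ∧ (∀ x ∈ σ, x ∈ S ∪ {w}) ∧ b ∉ σ ∧ z ∈ σ ∧ (∀ x ∈ σ, x ∈ π) := by
    intro π hπ
    obtain ⟨σ, l₂, hdec⟩ := List.append_of_mem hπ.right_mem
    obtain ⟨_, hsuf, hbσ, _, _, _⟩ := hπ.split hdec
    have hl₂ : l₂ = [] := by
      have h := hsuf.eq_singleton
      injection h
    subst hl₂
    have hσne : σ ≠ [] := by
      rintro rfl
      have h := hπ.1
      rw [hdec] at h
      simp at h
      exact hab h.symm
    have hzmem : σ.getLast hσne ∈ σ := List.getLast_mem hσne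
    have hzπ : (σ.getLast hσne, b) ∈ pairs π := by
      rw [hdec, pairs_append σ [b] hσne (by simp)]
      exact List.mem_append_right _ (List.mem_cons_self)
    have hadj_zb : GA.Adj (σ.getLast hσne) b := chain'_iff_pairs.mp hπ.2.2.2 _ hzπ
    have hzwp : σ.getLast hσne = w ∨ σ.getLast hσne = p := by
      rcases hclassify _ b hadj_zb with ⟨_, _, hbm⟩ | h | h
      · exact absurd hbm hbSw
      · rcases Sym2.eq_iff.mp h with ⟨e1, _⟩ | ⟨_, e2⟩
        · exact Or.inl e1
        · exact absurd e2.symm hwb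
      · rcases Sym2.eq_iff.mp h with ⟨e1, _⟩ | ⟨_, e2⟩
        · exact Or.inr e1
        · exact absurd e2.symm hpb
    have hpairsσ : ∀ pr ∈ pairs σ, pr ∈ pairs π := fun pr hpr =>
      pairs_prefix ⟨[b], hdec.symm⟩ hpr
    have hpairsG : ∀ pr ∈ pairs σ, G.Adj pr.1 pr.2 ∧ pr.1 ∈ S ∪ {w} ∧ pr.2 ∈ S ∪ {w} := by
      intro pr hpr
      have hAdj : GA.Adj pr.1 pr.2 := chain'_iff_pairs.mp hπ.2.2.2 _ (hpairsσ pr hpr)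
      obtain ⟨hm1, hm2⟩ := mem_of_mem_pairs hpr
      rcases hclassify _ _ hAdj with h | h | h
      · exact h
      · exfalso
        rcases Sym2.eq_iff.mp h with ⟨_, e2⟩ | ⟨e1, _⟩
        · exact hbσ (e2 ▸ hm2)
        · exact hbσ (e1 ▸ hm1)
      · exfalso
        rcases Sym2.eq_iff.mp h with ⟨_, e2⟩ | ⟨e1, _⟩
        · exact hbσ (e2 ▸ hm2)
        · exact hbσ (e1 ▸ hm1)
    have hGσ : G.IsPathL a (σ.getLast hσne) σ := by
      refine ⟨?_, ?_, ?_, ?_⟩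
      · have h := hπ.1
        rw [hdec] at h
        rcases σ with _ | ⟨c, t⟩
        · exact absurd rfl hσne
        · simpa using h
      · exact List.getLast?_eq_getLast hσne
      · exact List.Nodup.sublist (List.IsPrefix.sublist ⟨[b], hdec.symm⟩) hπ.2.2.1
      · exact chain'_iff_pairs.mpr fun pr hpr => (hpairsG pr hpr).1
    have hmemσ : ∀ x ∈ σ, x ∈ S ∪ {w} := by
      intro x hx
      by_cases hlen : 2 ≤ σ.length
      · obtain ⟨pr, hpr, hx'⟩ := mem_pairs_of_mem hlen hx
        rcases hx' with rfl | rfl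
        · exact (hpairsG pr hpr).2.1
        · exact (hpairsG pr hpr).2.2
      · have hσa : σ = [a] := by
          rcases σ with _ | ⟨c, t⟩
          · exact absurd rfl hσne
          · rcases t with _ | ⟨d, t'⟩
            · have h := hGσ.1; simp at h; rw [h]
            · exfalso; simp at hlen
        rw [hσa] at hx
        simp at hx
        subst hx
        exact Or.inl haS
    exact ⟨σ.getLast hσne, σ, hzwp, hGσ, hmemσ, hbσ, hzmem,
      fun x hx => by rw [hdec]; exact List.mem_append_left _ hx⟩
  obtain ⟨z₁, σ₁, hz₁, hσ₁, hm₁, hb₁, hzin₁, hsubπ₁⟩ := post π₁ hπ₁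
  obtain ⟨z₂, σ₂, hz₂, hσ₂, hm₂, hb₂, hzin₂, hsubπ₂⟩ := post π₂ hπ₂
  have hz12 : z₁ ≠ z₂ := by
    rintro rfl
    rcases hππ z₁ (hsubπ₁ _ hzin₁) (hsubπ₂ _ hzin₂) with h | h
    · rcases hz₁ with rfl | rfl
      · exact hwa h
      · exact hpa h
    · rcases hz₁ with rfl | rfl
      · exact hwb h
      · exact hpb h
  have final : ∀ (σa σb : List V), G.IsPathL a w σa → G.IsPathL a p σb →
      (∀ x ∈ σa, x ∈ S ∪ {w}) → (∀ x ∈ σb, x ∈ S ∪ {w}) →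
      b ∉ σa → b ∉ σb → w ∈ σa →
      (∀ x, x ∈ σa → x ∈ σb → x = a ∨ x = b) →
      ∃ Aw Ap, G.IsPathL a w Aw ∧ G.IsPathL a p Ap ∧
        (∀ x ∈ Aw, x ∈ Ap → x = a) ∧
        (∀ x ∈ Aw, x ∈ G.Side a w q ∨ x = w) ∧ (∀ x ∈ Ap, x ∈ G.Side a w q) := by
    intro σa σb hpa' hpb' hma hmb hba hbb hwin hdisj
    refine ⟨σa, σb, hpa', hpb', ?_, ?_, ?_⟩
    · intro x hx₁ hx₂
      rcases hdisj x hx₁ hx₂ with h | h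
      · exact h
      · exact absurd (h ▸ hx₁) hba
    · intro x hx
      rcases hma x hx with h | h
      · exact Or.inl h
      · exact Or.inr (by simpa using h)
    · intro x hx
      rcases hmb x hx with h | h
      · exact h
      · exfalso
        have hxw : x = w := by simpa using h
        subst hxw
        rcases hdisj x hwin hx with h' | h'
        · exact hwa h'
        · exact hwb h'
  rcases hz₁ with rfl | rfl
  · rcases hz₂ with h2 | rfl
    · exact absurd h2.symm hz12
    · exact final σ₁ σ₂ hσ₁ hσ₂ hm₁ hm₂ hb₁ hb₂ hzin₁
        (fun x hx₁ hx₂ => hππ x (hsubπ₁ _ hx₁) (hsubπ₂ _ hx₂))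
  · rcases hz₂ with rfl | h2
    · exact final σ₂ σ₁ hσ₂ hσ₁ hm₂ hm₁ hb₂ hb₁ hzin₂
        (fun x hxa hxb => hππ x (hsubπ₁ _ hxb) (hsubπ₂ _ hxa))
    · exact absurd h2.symm hz12

theorem menger2 [Fintype V] :
    ∀ (N : ℕ) (G : MGraph V) (a b : V), edgeSum G ≤ N → Hyp G a b → Good G a b := by
  intro N
  induction N using Nat.strong_induction_on with
  | _ N IH =>
  intro G a b hGN hH
  obtain ⟨hab, hnadj, hex, hloc⟩ := hH
  classical
  by_cases htriv : ∀ u v' : V, G.Adj u v' → u = a ∨ u = b ∨ v' = a ∨ v' = b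
  · -- every path has the form [a, z, b]
    have hshape : ∀ l, G.IsPathL a b l → ∃ z, z ≠ a ∧ z ≠ b ∧ l = [a, z, b] := by
      intro l hl
      have hc := hl.head_cons
      rcases ht : l.tail with _ | ⟨z, t'⟩
      · exfalso
        have h1 : l = [a] := by rw [hc, ht]
        have h2 := hl.2.1; rw [h1] at h2; simp at h2; exact hab h2
      · have hl' : l = a :: z :: t' := by rw [hc, ht]
        have hnd := hl.2.2.1; rw [hl'] at hnd
        have hza : z ≠ a := by
          rintro rfl; exact (List.nodup_cons.mp hnd).1 (List.mem_cons_self)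
        have hzb : z ≠ b := by
          rintro rfl
          obtain ⟨_, hsuf, _, _, _, _⟩ := hl.split (l₁ := [a]) (x := z) (l₂ := t')
            (by rw [hl']; rfl)
          have h1 := hsuf.eq_singleton
          have ht' : t' = [] := by injection h1
          subst ht'
          have hch := hl.2.2.2; rw [hl'] at hch
          exact hnadj (List.isChain_cons_cons.mp hch).1
        rcases ht2 : t' with _ | ⟨c, t''⟩
        · exfalso
          have h1 : l = [a, z] := by rw [hl', ht2]
          have h2 := hl.2.1; rw [h1] at h2; simp at h2; exact hzb h2
        · have hch := hl.2.2.2; rw [hl', ht2] at hch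
          have hadj_zc : G.Adj z c := (List.isChain_cons_cons.mp ((List.isChain_cons_cons.mp hch).2)).1
          have hca_or : c = a ∨ c = b := by
            rcases htriv z c hadj_zc with h | h | h | h
            · exact absurd h hza
            · exact absurd h hzb
            · exact Or.inl h
            · exact Or.inr h
          rcases hca_or with rfl | rfl
          · exfalso
            exact (List.nodup_cons.mp hnd).1
              (by rw [ht2]; exact List.mem_cons_of_mem _ (List.mem_cons_self))
          · obtain ⟨_, hsuf, _, _, _, _⟩ := hl.split (l₁ := [a, z]) (x := c) (l₂ := t'')
              (by rw [hl', ht2]; rfl)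
            have h1 := hsuf.eq_singleton
            have ht'' : t'' = [] := by injection h1
            subst ht''
            exact ⟨z, hza, hzb, by rw [hl', ht2]⟩
    obtain ⟨l₀, hl₀⟩ := hex
    obtain ⟨z, hza, hzb, rfl⟩ := hshape l₀ hl₀
    obtain ⟨l₁, hl₁, hzl₁⟩ := hloc z hza hzb
    obtain ⟨z', hza', hzb', rfl⟩ := hshape l₁ hl₁
    have hzz : z ≠ z' := by intro h; exact hzl₁ (by rw [h]; simp)
    refine ⟨[a, z, b], [a, z', b], hl₀, hl₁, ?_⟩
    intro x hx₁ hx₂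
    simp at hx₁ hx₂
    rcases hx₁ with rfl | rfl | rfl
    · exact Or.inl rfl
    · rcases hx₂ with h | h | h
      · exact Or.inl h
      · exact absurd h hzz
      · exact Or.inr h
    · exact Or.inr rfl
  · push_neg at htriv
    obtain ⟨p, q, hadj_pq, hpa, hpb, hqa, hqb⟩ := htriv
    have hpq : p ≠ q := by
      rintro rfl
      have h0 := G.loopless p
      have h1 : 0 < G.m s(p, p) := hadj_pq
      omega
    set f : Sym2 V := s(p, q) with hf
    set G' := G.delE f with hG'
    have hdel_le : ∀ e, G'.m e ≤ G.m e := by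
      intro e; simp only [hG', MGraph.delE]; split <;> omega
    have hdel_lt : G'.m f < G.m f := by
      have h1 : 0 < G.m f := hadj_pq
      have h2 : G'.m f = G.m f - 1 := by
        simp only [hG', MGraph.delE]
        split
        · rfl
        · rename_i hne; exact absurd trivial hne
      omega
    have hG'path : ∀ x y l, G'.IsPathL x y l → G.IsPathL x y l :=
      fun x y l h => h.mono hdel_le
    have hnadj' : ¬ G'.Adj a b := fun h => hnadj (lt_of_lt_of_le h (hdel_le _))
    by_cases hm2 : 2 ≤ G.m f
    · have hAdj_eq : ∀ u v', G.Adj u v' → G'.Adj u v' := by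
        intro u v' h
        show 0 < G'.m s(u, v')
        simp only [hG', MGraph.delE]
        split
        · rename_i heq; rw [heq]; omega
        · exact h
      have hGG' : ∀ x y l, G.IsPathL x y l → G'.IsPathL x y l := fun x y l h =>
        ⟨h.1, h.2.1, h.2.2.1, h.2.2.2.imp fun {u v'} huv => hAdj_eq _ _ huv⟩
      have hHyp' : Hyp G' a b := by
        refine ⟨hab, hnadj', ?_, ?_⟩
        · obtain ⟨l, hl⟩ := hex; exact ⟨l, hGG' _ _ _ hl⟩
        · intro v hva hvb
          obtain ⟨l, hl, hvl⟩ := hloc v hva hvb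
          exact ⟨l, hGG' _ _ _ hl, hvl⟩
      obtain ⟨l₁, l₂, h1, h2, hd⟩ := IH (edgeSum G')
        (lt_of_lt_of_le (edgeSum_lt hdel_le hdel_lt) hGN) G' a b le_rfl hHyp'
      exact ⟨l₁, l₂, hG'path _ _ _ h1, hG'path _ _ _ h2, hd⟩
    · have hm1 : G.m f = 1 := by
        have h1 : 0 < G.m f := hadj_pq
        omega
      have hGG'_nopair : ∀ l x y, G.IsPathL x y l →
          (∀ pr ∈ pairs l, s(pr.1, pr.2) ≠ f) → G'.IsPathL x y l := by
        intro l x y h hnp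
        refine ⟨h.1, h.2.1, h.2.2.1, chain'_iff_pairs.mpr ?_⟩
        intro pr hpr
        have hG := chain'_iff_pairs.mp h.2.2.2 pr hpr
        show 0 < G'.m s(pr.1, pr.2)
        simp only [hG', MGraph.delE]
        rw [if_neg (hnp pr hpr)]
        exact hG
      have hcutgen : ∀ l, G.IsPathL a b l →
          (∃ pr ∈ pairs l, s(pr.1, pr.2) = f) ∨ G'.IsPathL a b l := by
        intro l hl
        by_cases hp : ∃ pr ∈ pairs l, s(pr.1, pr.2) = f
        · exact Or.inl hp
        · push_neg at hp
          exact Or.inr (hGG'_nopair l a b hl hp)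
      have hex' : ∃ l, G'.IsPathL a b l := by
        obtain ⟨lp, hlp, hplp⟩ := hloc p hpa hpb
        rcases hcutgen lp hlp with ⟨pr, hpr, heq⟩ | h
        · exfalso
          obtain ⟨hm1', hm2'⟩ := mem_of_mem_pairs hpr
          rcases Sym2.eq_iff.mp heq with ⟨e1, _⟩ | ⟨_, e2⟩
          · exact hplp (e1 ▸ hm1')
          · exact hplp (e2 ▸ hm2')
        · exact ⟨lp, h⟩
      by_cases hloc' : ∀ v, v ≠ a → v ≠ b → ∃ l, G'.IsPathL a b l ∧ v ∉ l
      · obtain ⟨l₁, l₂, h1, h2, hd⟩ := IH (edgeSum G')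
          (lt_of_lt_of_le (edgeSum_lt hdel_le hdel_lt) hGN) G' a b le_rfl
          ⟨hab, hnadj', hex', hloc'⟩
        exact ⟨l₁, l₂, hG'path _ _ _ h1, hG'path _ _ _ h2, hd⟩
      · push_neg at hloc'
        obtain ⟨w, hwa, hwb, hwcut'⟩ := hloc'
        have hcut : ∀ l, G.IsPathL a b l → w ∈ l ∨
            ∃ pr ∈ pairs l, s(pr.1, pr.2) = s(p, q) := by
          intro l hl
          rcases hcutgen l hl with h | h
          · exact Or.inr h
          · exact Or.inl (hwcut' l h)
        obtain ⟨R₀, hR₀, hwR₀⟩ := hloc w hwa hwb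
        have hpair : ∃ pr ∈ pairs R₀, s(pr.1, pr.2) = f := by
          rcases hcutgen R₀ hR₀ with h | h
          · exact h
          · exact absurd (hwcut' _ h) hwR₀
        obtain ⟨pr, hprR, hpreq⟩ := hpair
        have main2 : ∀ p' q', p' ≠ a → p' ≠ b → q' ≠ a → q' ≠ b → p' ≠ q' →
            s(p', q') = f → (p', q') ∈ pairs R₀ → Good G a b := by
          intro p' q' hpa' hpb' hqa' hqb' hpq' hfeq hprR'
          have hp'R : p' ∈ R₀ := (mem_of_mem_pairs hprR').1
          have hq'R : q' ∈ R₀ := (mem_of_mem_pairs hprR').2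
          have hwp : w ≠ p' := fun h => hwR₀ (h ▸ hp'R)
          have hwq : w ≠ q' := fun h => hwR₀ (h ▸ hq'R)
          have hcut' : ∀ l, G.IsPathL a b l → w ∈ l ∨
              ∃ pr2 ∈ pairs l, s(pr2.1, pr2.2) = s(p', q') := by
            intro l hl
            rcases hcut l hl with h | ⟨pr2, hpr2, heq2⟩
            · exact Or.inl h
            · exact Or.inr ⟨pr2, hpr2, heq2.trans hfeq.symm⟩
          obtain ⟨Aw, Ap, hAw, hAp, hAdisj, hAwS, hApS⟩ :=
            side_fan IH G a b w p' q' hGN hab hnadj hex hloc hwa hwb hpa' hpb'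
              hqa' hqb' hpq' hwp hwq hcut' R₀ hR₀ hwR₀ hprR'
          have hcutB : ∀ l, G.IsPathL b a l → w ∈ l ∨
              ∃ pr2 ∈ pairs l, s(pr2.1, pr2.2) = s(q', p') := by
            intro l hl
            rcases hcut' l.reverse hl.reverse with h | ⟨pr2, hpr2, heq2⟩
            · exact Or.inl (by rwa [List.mem_reverse] at h)
            · refine Or.inr ⟨(pr2.2, pr2.1), mem_pairs_reverse.mp hpr2, ?_⟩
              rw [show s(pr2.2, pr2.1) = s(pr2.1, pr2.2) from Sym2.eq_swap]
              rw [show s(q', p') = s(p', q') from Sym2.eq_swap]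
              exact heq2
          have hRrev_pair : (q', p') ∈ pairs R₀.reverse :=
            mem_pairs_reverse.mpr (by simpa using hprR')
          have hwRrev : w ∉ R₀.reverse := by rwa [List.mem_reverse]
          have hexB : ∃ l, G.IsPathL b a l := ⟨R₀.reverse, hR₀.reverse⟩
          have hlocB : ∀ v, v ≠ b → v ≠ a → ∃ l, G.IsPathL b a l ∧ v ∉ l := by
            intro v hvb hva
            obtain ⟨l, hl, hvl⟩ := hloc v hva hvb
            exact ⟨l.reverse, hl.reverse, by rwa [List.mem_reverse]⟩
          obtain ⟨Bw, Bq, hBw, hBq', hBdisj, hBwS, hBqS⟩ :=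
            side_fan IH G b a w q' p' hGN hab.symm (fun h => hnadj (MGraph.adj_symm h))
              hexB hlocB hwb hwa hqb' hqa' hpb' hpa' (Ne.symm hpq') hwq hwp hcutB
              R₀.reverse hR₀.reverse hwRrev hRrev_pair
          have hdisjS : ∀ x, x ∈ G.Side a w q' → x ∈ G.Side b w p' → False := by
            rintro x ⟨la, hla, hwla, hqla⟩ ⟨lb, hlb, hwlb, hplb⟩
            exact join_false hcut' hla hlb hwla hwlb (Or.inl hqla) (Or.inr hplb)
          have hwSb : w ∉ G.Side b w p' := MGraph.not_avoid_mem_side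
          have hwSa : w ∉ G.Side a w q' := MGraph.not_avoid_mem_side
          have hP1 : G.IsPathL a b (Aw ++ Bw.reverse.tail) := by
            apply hAw.concat hBw.reverse
            intro u hu hu'
            have hu'' : u ∈ Bw := by rwa [List.mem_reverse] at hu'
            rcases hAwS u hu with h | h
            · rcases hBwS u hu'' with h' | h'
              · exact (hdisjS u h h').elim
              · exact h'
            · exact h
          have hP2 : G.IsPathL a b (Ap ++ Bq.reverse) := by
            apply hAp.concat_edge hBq'.reverse
              (chain'_iff_pairs.mp hR₀.2.2.2 _ hprR')
            intro u hu hu'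
            have hu'' : u ∈ Bq := by rwa [List.mem_reverse] at hu'
            exact hdisjS u (hApS u hu) (hBqS u hu'')
          refine ⟨Aw ++ Bw.reverse.tail, Ap ++ Bq.reverse, hP1, hP2, ?_⟩
          intro x hx1 hx2
          rcases List.mem_append.mp hx1 with hxa | hxb
          · rcases List.mem_append.mp hx2 with hxa' | hxb'
            · exact Or.inl (hAdisj x hxa hxa')
            · exfalso
              have hxB : x ∈ Bq := by rwa [List.mem_reverse] at hxb'
              rcases hAwS x hxa with h | h
              · exact hdisjS x h (hBqS x hxB)
              · subst h; exact hwSb (hBqS _ hxB)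
          · have hxBw : x ∈ Bw := by
              rw [← List.mem_reverse]; exact List.mem_of_mem_tail hxb
            rcases List.mem_append.mp hx2 with hxa' | hxb'
            · exfalso
              rcases hBwS x hxBw with h | h
              · exact hdisjS x (hApS x hxa') h
              · subst h; exact hwSa (hApS _ hxa')
            · have hxBq : x ∈ Bq := by rwa [List.mem_reverse] at hxb'
              exact Or.inr (hBdisj x hxBw hxBq)
        have hpr' : (pr.1, pr.2) ∈ pairs R₀ := by simpa using hprR
        rcases Sym2.eq_iff.mp hpreq with ⟨e1, e2⟩ | ⟨e1, e2⟩
        · rw [e1, e2] at hpr'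
          exact main2 p q hpa hpb hqa hqb hpq rfl hpr'
        · rw [e1, e2] at hpr'
          exact main2 q p hqa hqb hpa hpb (Ne.symm hpq)
            (by rw [hf]; exact Sym2.eq_swap) hpr'

lemma natCard_le_one {α : Type*} (h : ∀ x y : α, x = y) : Nat.card α ≤ 1 := by
  rcases isEmpty_or_nonempty α with he | hn
  · simp [Nat.card_of_isEmpty]
  · obtain ⟨x⟩ := hn
    haveI : Unique α := ⟨⟨x⟩, fun y => h y x⟩
    simp [Nat.card_unique]

lemma usesEdge_reverse {l : List V} {e : Sym2 V} : usesEdge l.reverse e ↔ usesEdge l e := by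
  constructor
  · rintro ⟨prm, hpr, heq⟩
    exact ⟨(prm.2, prm.1), mem_pairs_reverse.mp hpr, by rwa [Sym2.eq_swap]⟩
  · rintro ⟨prm, hpr, heq⟩
    exact ⟨(prm.2, prm.1), mem_pairs_reverse.mpr (by exact hpr), by rwa [Sym2.eq_swap]⟩

lemma MGraph.ConnKM.symm {G : MGraph V} {k : ℕ} {x y : V} (h : G.ConnKM k x y) :
    G.ConnKM k y x := by
  obtain ⟨P, hp, hd, hc⟩ := h
  refine ⟨fun i => (P i).reverse, fun i => (hp i).reverse, ?_, ?_⟩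
  · intro i j hij v hvi hvj
    rw [List.mem_reverse] at hvi hvj
    rcases hd i j hij v hvi hvj with h | h
    · exact Or.inr h
    · exact Or.inl h
  · intro e
    have heq : Nat.card {i // usesEdge ((P i).reverse) e} =
        Nat.card {i // usesEdge (P i) e} :=
      Nat.card_congr (Equiv.subtypeEquivRight fun i => usesEdge_reverse)
    have h2 := hc e
    exact le_trans (le_of_eq heq) h2

/-- A contracted minimal `Q`-triconnected multigraph with more than
three terminals is simple: every edge has multiplicity at most one (and there
are no loops). -/
theorem stmt_5 [Fintype V] (H : MGraph V) (Q : Set V)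
    (hmin : H.MinQTri Q) (hcontracted : ∀ v : V, H.deg v ≠ 2)
    (hQ : 3 < Q.ncard) :
    ∀ e : Sym2 V, H.m e ≤ 1 := by
  intro e
  induction e using Sym2.ind with
  | _ a b =>
  by_contra hcon
  push_neg at hcon
  classical
  have hab : a ≠ b := by
    rintro rfl
    rw [H.loopless a] at hcon
    omega
  have hpos : 0 < H.m s(a, b) := by omega
  have hfail := hmin.2.1 s(a, b) hpos
  rw [MGraph.QTri] at hfail
  push_neg at hfail
  obtain ⟨x, hxQ, y, hyQ, hxy, hxyfail⟩ := hfail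
  set H' := H.delE s(a, b) with hH'
  have hm_e : H'.m s(a, b) = H.m s(a, b) - 1 := by
    simp only [hH', MGraph.delE]
    split
    · rfl
    · rename_i hne; exact absurd trivial hne
  have hm_ne : ∀ g, g ≠ s(a, b) → H'.m g = H.m g := by
    intro g hg
    simp only [hH', MGraph.delE]
    rw [if_neg hg]
  have hH'le : ∀ g, H'.m g ≤ H.m g := by
    intro g
    by_cases hg : g = s(a, b)
    · rw [hg, hm_e]; omega
    · rw [hm_ne _ hg]
  have hHH' : ∀ x' y' l, H.IsPathL x' y' l → H'.IsPathL x' y' l := by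
    intro x' y' l h
    refine ⟨h.1, h.2.1, h.2.2.1, h.2.2.2.imp ?_⟩
    intro u v huv
    show 0 < H'.m s(u, v)
    by_cases hg : s(u, v) = s(a, b)
    · rw [hg, hm_e]; omega
    · rw [hm_ne _ hg]; exact huv
  have huses_mem : ∀ l, usesEdge l s(a, b) → a ∈ l ∧ b ∈ l := by
    rintro l ⟨prm, hpr, heq⟩
    obtain ⟨h1, h2⟩ := mem_of_mem_pairs (l := l) hpr
    rcases Sym2.eq_iff.mp heq with ⟨e1, e2⟩ | ⟨e1, e2⟩
    · exact ⟨e1 ▸ h1, e2 ▸ h2⟩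
    · exact ⟨e2 ▸ h2, e1 ▸ h1⟩
  -- the failing pair must be {a, b}
  have hbad : (x = a ∧ y = b) ∨ (x = b ∧ y = a) := by
    by_contra hne
    push_neg at hne
    obtain ⟨P, hPpath, hPdisj, hPcount⟩ := hmin.1 x hxQ y hyQ hxy
    apply hxyfail
    refine ⟨P, fun i => hHH' _ _ _ (hPpath i), hPdisj, ?_⟩
    intro g
    by_cases hg : g = s(a, b)
    · subst hg
      have hsub : ∀ i j : Fin 3, usesEdge (P i) s(a, b) → usesEdge (P j) s(a, b) → i = j := by
        intro i j hi hj
        by_contra hij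
        obtain ⟨hai, hbi⟩ := huses_mem _ hi
        obtain ⟨haj, hbj⟩ := huses_mem _ hj
        rcases hPdisj i j hij a hai haj with h1 | h1 <;>
          rcases hPdisj i j hij b hbi hbj with h2 | h2
        · exact hab (h1.trans h2.symm)
        · exact hne.1 h1.symm h2.symm
        · exact hne.2 h2.symm h1.symm
        · exact hab (h1.trans h2.symm)
      have hcard : Nat.card {i : Fin 3 // usesEdge (P i) s(a, b)} ≤ 1 :=
        natCard_le_one (fun z1 z2 => Subtype.ext (hsub z1.1 z2.1 z1.2 z2.2))
      rw [hm_e]; omega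
    · rw [hm_ne _ hg]; exact hPcount g
  obtain ⟨haQ, hbQ, hfail_ab⟩ : a ∈ Q ∧ b ∈ Q ∧ ¬ H'.ConnKM 3 a b := by
    rcases hbad with ⟨rfl, rfl⟩ | ⟨rfl, rfl⟩
    · exact ⟨hxQ, hyQ, hxyfail⟩
    · exact ⟨hyQ, hxQ, fun h => hxyfail h.symm⟩
  -- two further terminals
  have h2card : 1 < (Q \ {a, b}).ncard := by
    have h1 : Q.ncard ≤ (Q \ {a, b}).ncard + ({a, b} : Set V).ncard := by
      refine le_trans (Set.ncard_le_ncard ?_ ((Q \ {a, b}).toFinite.union (Set.toFinite _)))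
        (Set.ncard_union_le _ _)
      intro u hu
      by_cases h : u ∈ ({a, b} : Set V)
      · exact Or.inr h
      · exact Or.inl ⟨hu, h⟩
    have h2 : ({a, b} : Set V).ncard ≤ 2 :=
      le_trans (Set.ncard_insert_le a {b}) (by simp)
    omega
  obtain ⟨c, d, hc, hd, hcd⟩ := (Set.one_lt_ncard_iff (Set.toFinite _)).mp h2card
  obtain ⟨hcQ, hcab⟩ := hc
  obtain ⟨hdQ, hdab⟩ := hd
  have hca : c ≠ a := fun h => hcab (by simp [h])
  have hcb : c ≠ b := fun h => hcab (by simp [h])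
  have hda : d ≠ a := fun h => hdab (by simp [h])
  have hdb : d ≠ b := fun h => hdab (by simp [h])
  -- fan paths avoiding two vertices
  have hfan : ∀ (s t : V), s ∈ Q → t ∈ Q → s ≠ t → ∀ (u v : V),
      u ≠ s → u ≠ t → v ≠ s → v ≠ t → ∃ l, H.IsPathL s t l ∧ u ∉ l ∧ v ∉ l := by
    intro s t hsQ htQ hst u v hus hut hvs hvt
    obtain ⟨P, hPpath, hPdisj, _⟩ := hmin.1 s hsQ t htQ hst
    have hu2 : ∀ i j : Fin 3, i ≠ j → u ∈ P i → u ∈ P j → False := by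
      intro i j hij h1 h2
      rcases hPdisj i j hij u h1 h2 with h | h
      · exact hus h
      · exact hut h
    have hv2 : ∀ i j : Fin 3, i ≠ j → v ∈ P i → v ∈ P j → False := by
      intro i j hij h1 h2
      rcases hPdisj i j hij v h1 h2 with h | h
      · exact hvs h
      · exact hvt h
    have hpick : ∃ i : Fin 3, u ∉ P i ∧ v ∉ P i := by
      by_contra hcp
      push_neg at hcp
      have hmem : ∀ i : Fin 3, u ∈ P i ∨ v ∈ P i := by
        intro i
        by_cases h : u ∈ P i
        · exact Or.inl h
        · exact Or.inr (hcp i h)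
      rcases hmem 0 with h0 | h0 <;> rcases hmem 1 with h1 | h1 <;> rcases hmem 2 with h2 | h2
      · exact hu2 0 1 (by decide) h0 h1
      · exact hu2 0 1 (by decide) h0 h1
      · exact hu2 0 2 (by decide) h0 h2
      · exact hv2 1 2 (by decide) h1 h2
      · exact hu2 1 2 (by decide) h1 h2
      · exact hv2 0 2 (by decide) h0 h2
      · exact hv2 0 1 (by decide) h0 h1
      · exact hv2 0 1 (by decide) h0 h1
    obtain ⟨i, hui, hvi⟩ := hpick
    exact ⟨P i, hPpath i, hui, hvi⟩
  -- the graph with all a-b edges removed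
  set G₀ : MGraph V := H.zeroE s(a, b) with hG₀
  have hG₀m_e : G₀.m s(a, b) = 0 := by
    simp only [hG₀, MGraph.zeroE]
    split
    · rfl
    · rename_i hne'; exact absurd trivial hne'
  have hG₀m_ne : ∀ g, g ≠ s(a, b) → G₀.m g = H.m g := by
    intro g hg
    simp only [hG₀, MGraph.zeroE]
    rw [if_neg hg]
  have hG₀nadj : ¬ G₀.Adj a b := by
    show ¬ 0 < G₀.m s(a, b)
    rw [hG₀m_e]; simp
  have hG₀loc : ∀ v, v ≠ a → v ≠ b → ∃ l, G₀.IsPathL a b l ∧ v ∉ l := by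
    intro v hva hvb
    obtain ⟨t, htQ, hta, htb, htv⟩ : ∃ t, t ∈ Q ∧ t ≠ a ∧ t ≠ b ∧ t ≠ v := by
      by_cases h : c = v
      · exact ⟨d, hdQ, hda, hdb, fun hh => hcd (h.trans hh.symm)⟩
      · exact ⟨c, hcQ, hca, hcb, h⟩
    obtain ⟨l₁, h1, hb1, hv1⟩ := hfan a t haQ htQ (Ne.symm hta) b v hab.symm (Ne.symm htb)
      hva (Ne.symm htv)
    obtain ⟨l₂, h2, ha2, hv2⟩ := hfan t b htQ hbQ htb a v (Ne.symm hta) hab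
      (Ne.symm htv) hvb
    obtain ⟨hwalk, hmem, hpairs⟩ := h1.concat_walk h2
    obtain ⟨l', hp', hm', hpr'⟩ := hwalk.exists_path
    have hnp : ∀ pr ∈ pairs l', s(pr.1, pr.2) ≠ s(a, b) := by
      intro pr hpr heq
      rcases hpairs pr (hpr' pr hpr) with h | h
      · obtain ⟨hm1, hm2⟩ := mem_of_mem_pairs h
        rcases Sym2.eq_iff.mp heq with ⟨_, e2⟩ | ⟨e1, _⟩
        · exact hb1 (e2 ▸ hm2)
        · exact hb1 (e1 ▸ hm1)
      · obtain ⟨hm1, hm2⟩ := mem_of_mem_pairs h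
        rcases Sym2.eq_iff.mp heq with ⟨e1, _⟩ | ⟨_, e2⟩
        · exact ha2 (e1 ▸ hm1)
        · exact ha2 (e2 ▸ hm2)
    refine ⟨l', ⟨hp'.1, hp'.2.1, hp'.2.2.1, chain'_iff_pairs.mpr ?_⟩, ?_⟩
    · intro pr hpr
      have hG := chain'_iff_pairs.mp hp'.2.2.2 pr hpr
      show 0 < G₀.m s(pr.1, pr.2)
      rw [hG₀m_ne _ (hnp pr hpr)]
      exact hG
    · intro hv
      rcases hmem _ (hm' _ hv) with h | h
      · exact hv1 h
      · exact hv2 h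
  have hG₀ex : ∃ l, G₀.IsPathL a b l := by
    obtain ⟨l, hl, _⟩ := hG₀loc c hca hcb
    exact ⟨l, hl⟩
  obtain ⟨R₁, R₂, hR₁, hR₂, hRdisj⟩ :=
    menger2 (edgeSum G₀) G₀ a b le_rfl ⟨hab, hG₀nadj, hG₀ex, hG₀loc⟩
  -- build a 3-path system for H'
  apply hfail_ab
  have hG₀H' : ∀ x' y' l, G₀.IsPathL x' y' l → H'.IsPathL x' y' l := by
    intro x' y' l h
    apply h.mono
    intro g
    by_cases hg : g = s(a, b)
    · rw [hg, hG₀m_e]; exact Nat.zero_le _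
    · rw [hG₀m_ne _ hg, hm_ne _ hg]
  have hR₁' : H'.IsPathL a b R₁ := hG₀H' _ _ _ hR₁
  have hR₂' : H'.IsPathL a b R₂ := hG₀H' _ _ _ hR₂
  have hABpath : H'.IsPathL a b [a, b] := by
    refine MGraph.isPathL_pair hab ?_
    show 0 < H'.m s(a, b)
    rw [hm_e]; omega
  have hnouse : ∀ (l : List V) x' y', G₀.IsPathL x' y' l → ¬ usesEdge l s(a, b) := by
    rintro l x' y' h ⟨prm, hpr, heq⟩
    have hadj : G₀.Adj prm.1 prm.2 := chain'_iff_pairs.mp h.2.2.2 _ hpr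
    have hlt : 0 < G₀.m s(prm.1, prm.2) := hadj
    rw [heq, hG₀m_e] at hlt
    exact absurd hlt (by simp)
  set P' : Fin 3 → List V := ![[a, b], R₁, R₂] with hP'
  have hP'0 : P' 0 = [a, b] := rfl
  have hP'1 : P' 1 = R₁ := rfl
  have hP'2 : P' 2 = R₂ := rfl
  have hdisjP : ∀ i j, i ≠ j → ∀ v ∈ P' i, v ∈ P' j → v = a ∨ v = b := by
    have hAB : ∀ v, v ∈ ([a, b] : List V) → v = a ∨ v = b := by
      intro v hv; simpa using hv
    intro i j hij v hvi hvj
    fin_cases i <;> fin_cases j <;>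
      first
      | exact absurd rfl hij
      | exact hAB v hvi
      | exact hAB v hvj
      | exact hRdisj v hvi hvj
      | exact hRdisj v hvj hvi
  have hPH : ∀ i, H.IsPathL a b (P' i) := by
    intro i
    have : H'.IsPathL a b (P' i) := by
      fin_cases i
      · exact hABpath
      · exact hR₁'
      · exact hR₂'
    exact this.mono hH'le
  refine ⟨P', ?_, hdisjP, ?_⟩
  · intro i
    fin_cases i
    · exact hABpath
    · exact hR₁'
    · exact hR₂'
  · intro g
    by_cases hg : g = s(a, b)
    · subst hg
      have hsub : ∀ z : {i : Fin 3 // usesEdge (P' i) s(a, b)}, z.1 = 0 := by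
        rintro ⟨i, hi⟩
        fin_cases i
        · rfl
        · exact absurd hi (hnouse _ _ _ hR₁)
        · exact absurd hi (hnouse _ _ _ hR₂)
      have hcard : Nat.card {i : Fin 3 // usesEdge (P' i) s(a, b)} ≤ 1 :=
        natCard_le_one (fun z1 z2 => Subtype.ext ((hsub z1).trans (hsub z2).symm))
      rw [hm_e]; omega
    · rw [hm_ne _ hg]
      by_cases huse : ∃ i : Fin 3, usesEdge (P' i) g
      · obtain ⟨i₀, ⟨prm, hpr, heq⟩⟩ := huse
        have hadj : H.Adj prm.1 prm.2 := chain'_iff_pairs.mp (hPH i₀).2.2.2 _ hpr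
        have hposg : 0 < H.m g := by rw [← heq]; exact hadj
        have hne12 : prm.1 ≠ prm.2 := by
          rintro hEq
          rw [hEq] at heq
          rw [← heq, H.loopless] at hposg
          omega
        have hsub : ∀ i j : Fin 3, usesEdge (P' i) g → usesEdge (P' j) g → i = j := by
          intro i j hi hj
          by_contra hij
          obtain ⟨pr1, hpr1, he1⟩ := hi
          obtain ⟨pr2, hpr2, he2⟩ := hj
          obtain ⟨hm11, hm12⟩ := mem_of_mem_pairs (l := P' i) hpr1
          obtain ⟨hm21, hm22⟩ := mem_of_mem_pairs (l := P' j) hpr2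
          have heq12 : s(pr1.1, pr1.2) = s(pr2.1, pr2.2) := he1.trans he2.symm
          have hmem1j : pr1.1 ∈ P' j ∧ pr1.2 ∈ P' j := by
            rcases Sym2.eq_iff.mp heq12 with ⟨e1, e2⟩ | ⟨e1, e2⟩
            · exact ⟨e1.symm ▸ hm21, e2.symm ▸ hm22⟩
            · exact ⟨e1.symm ▸ hm22, e2.symm ▸ hm21⟩
          have h1ab : pr1.1 = a ∨ pr1.1 = b := hdisjP i j hij pr1.1 hm11 hmem1j.1
          have h2ab : pr1.2 = a ∨ pr1.2 = b := hdisjP i j hij pr1.2 hm12 hmem1j.2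
          have hne12' : pr1.1 ≠ pr1.2 := by
            rintro hEq
            rw [hEq] at he1
            rw [← he1, H.loopless] at hposg
            omega
          apply hg
          rw [← he1]
          rcases h1ab with rfl | rfl <;> rcases h2ab with h2 | h2
          · exact absurd h2 hne12'.symm
          · rw [h2]
          · rw [h2, Sym2.eq_swap]
          · exact absurd h2.symm hne12'
        have hcard : Nat.card {i : Fin 3 // usesEdge (P' i) g} ≤ 1 :=
          natCard_le_one (fun z1 z2 => Subtype.ext (hsub z1.1 z2.1 z1.2 z2.2))
        omega
      · have hempty : IsEmpty {i : Fin 3 // usesEdge (P' i) g} :=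
          ⟨fun z => huse ⟨z.1, z.2⟩⟩
        rw [Nat.card_of_isEmpty]
        exact Nat.zero_le _
end Aux
end

section
/- Let G be a simple 3-vertex-connected graph with at least six vertices and e an edge of G. Then e is nonremovable if and only if there exists a set S of exactly two vertices such that G − e − S has exactly two connected components A and B with |A| ≥ 2 and |B| ≥ 2. -/
open SimpleGraph

universe u

variable {V : Type u}

section Aux

/-- Crossing lemma: a walk from A to B with support in A ∪ B and no A-B edges is impossible. -/
lemma cross_lemma {W : Type*} {K : SimpleGraph W} {A B : Set W} (hd : Disjoint A B)
    (hno : ∀ a ∈ A, ∀ b ∈ B, ¬ K.Adj a b) {x y : W} (p : K.Walk x y)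
    (hx : x ∈ A) (hy : y ∈ B) (hsup : ∀ v ∈ p.support, v ∈ A ∪ B) : False := by
  induction p with
  | nil => exact hd.ne_of_mem hx hy rfl
  | cons h q ih =>
    rename_i a c b
    have hc : c ∈ A ∪ B := hsup c (by simp [SimpleGraph.Walk.support_cons])
    rcases hc with hc | hc
    · exact ih hc hy (fun w hw => hsup w (by simp [SimpleGraph.Walk.support_cons, hw]))
    · exact hno a hx c hc h

/-- A walk with support in `s` gives reachability in the induced graph;
moreover every support vertex is reachable from the start. -/
lemma walk_to_induce {W : Type*} {K : SimpleGraph W} {s : Set W} {x y : W}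
    (p : K.Walk x y) (hsup : ∀ v ∈ p.support, v ∈ s) (hx : x ∈ s) (hy : y ∈ s) :
    (SimpleGraph.induce s K).Reachable ⟨x, hx⟩ ⟨y, hy⟩ := by
  induction p with
  | nil => rfl
  | cons h q ih =>
    rename_i a c b
    have hc : c ∈ s := hsup c (by simp [SimpleGraph.Walk.support_cons])
    have h1 : (SimpleGraph.induce s K).Adj ⟨a, hx⟩ ⟨c, hc⟩ := h
    exact h1.reachable.trans (ih (fun w hw => hsup w (by simp [SimpleGraph.Walk.support_cons, hw])) hc hy)

/-- From a walk in the induced graph, we get a walk in the ambient graph whose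
support vertices are all in `s` and reachable (in the induced graph) from the start. -/
lemma induce_to_walk {W : Type*} {K : SimpleGraph W} {s : Set W} {a b : s}
    (p : (SimpleGraph.induce s K).Walk a b) :
    ∃ q : K.Walk a.1 b.1, ∀ v ∈ q.support, ∃ h : v ∈ s,
      (SimpleGraph.induce s K).Reachable a ⟨v, h⟩ := by
  induction p with
  | nil =>
    exact ⟨SimpleGraph.Walk.nil, fun v hv => by
      rw [SimpleGraph.Walk.support_nil, List.mem_singleton] at hv; subst hv
      exact ⟨Subtype.coe_prop _, by rfl⟩⟩
  | cons h q ih =>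
    rename_i x c y
    obtain ⟨q', hq'⟩ := ih
    refine ⟨SimpleGraph.Walk.cons (show K.Adj x.1 c.1 from h) q', ?_⟩
    intro w hw
    rw [SimpleGraph.Walk.support_cons, List.mem_cons] at hw
    rcases hw with rfl | hw
    · exact ⟨Subtype.coe_prop _, by rfl⟩
    · obtain ⟨hm, hr⟩ := hq' w hw
      exact ⟨hm, h.reachable.trans hr⟩

lemma min_degree_three [Finite V] {G : SimpleGraph V} (h3 : ThreeConnected G)
    (hcard : 6 ≤ Nat.card V) (w : V) : 3 ≤ vdeg G w := by
  by_contra hlt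
  push_neg at hlt
  have hs : (G.neighborSet w).ncard ≤ 2 := Nat.lt_succ_iff.mp hlt
  have hcon := h3.2 _ hs
  have hw : w ∈ (G.neighborSet w)ᶜ := fun h => G.irrefl h
  have h4 : 1 < ((G.neighborSet w)ᶜ).ncard := by
    have := Set.ncard_add_ncard_compl (G.neighborSet w)
    omega
  obtain ⟨z, hz, hzw⟩ := Set.exists_ne_of_one_lt_ncard h4 w
  obtain ⟨p⟩ := hcon.preconnected ⟨w, hw⟩ ⟨z, hz⟩
  cases p with
  | nil => exact hzw rfl
  | cons h q =>
    rename_i c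
    exact c.2 h

lemma vdeg_deleteEdges_ne {G : SimpleGraph V} {u v : V} {w : V} (hu : w ≠ u) (hv : w ≠ v) :
    vdeg (G.deleteEdges {s(u,v)}) w = vdeg G w := by
  unfold vdeg
  congr 1
  ext x
  simp only [SimpleGraph.mem_neighborSet, SimpleGraph.deleteEdges_adj, Set.mem_singleton_iff,
    Sym2.eq_iff]
  constructor
  · exact fun h => h.1
  · intro h
    refine ⟨h, ?_⟩
    rintro (⟨rfl, rfl⟩ | ⟨rfl, rfl⟩)
    · exact hu rfl
    · exact hv rfl

lemma vdeg_deleteEdges_u [Finite V] {G : SimpleGraph V} {u v : V} (he : G.Adj u v) :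
    vdeg (G.deleteEdges {s(u,v)}) u = vdeg G u - 1 := by
  unfold vdeg
  have hset : (G.deleteEdges {s(u,v)}).neighborSet u = G.neighborSet u \ {v} := by
    ext x
    rw [SimpleGraph.mem_neighborSet, SimpleGraph.deleteEdges_adj, Set.mem_diff,
      Set.mem_singleton_iff, SimpleGraph.mem_neighborSet]
    constructor
    · rintro ⟨h, h2⟩
      refine ⟨h, fun hxv => ?_⟩
      rw [Set.mem_singleton_iff] at hxv
      subst hxv
      exact h2 rfl
    · rintro ⟨h, hne⟩
      refine ⟨h, fun hmem => ?_⟩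
      rw [Sym2.eq_iff] at hmem
      rcases hmem with ⟨-, rfl⟩ | ⟨rfl, rfl⟩
      · exact hne rfl
      · exact G.irrefl h
  rw [hset, Set.ncard_diff_singleton_of_mem (s := G.neighborSet u) he]

lemma deg2_mem [Finite V] {G : SimpleGraph V} {u v : V} (h3 : ThreeConnected G)
    (hcard : 6 ≤ Nat.card V) {w : V} (hw : vdeg (G.deleteEdges {s(u,v)}) w = 2) :
    w = u ∨ w = v := by
  by_contra hcon
  push_neg at hcon
  rw [vdeg_deleteEdges_ne hcon.1 hcon.2] at hw
  have := min_degree_three h3 hcard w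
  omega

lemma H_not_adj_uv {G : SimpleGraph V} {u v : V} : ¬ (G.deleteEdges {s(u,v)}).Adj u v := by
  rw [SimpleGraph.deleteEdges_adj]
  rintro ⟨-, h⟩
  exact h rfl

lemma compress [Finite V] {G : SimpleGraph V} {u v : V} (h3 : ThreeConnected G)
    (hcard : 6 ≤ Nat.card V) (he : G.Adj u v)
    (s' : Set {w : V // vdeg (G.deleteEdges {s(u,v)}) w ≠ 2}) :
    ∀ (n : ℕ) (a b : V) (p : (G.deleteEdges {s(u,v)}).Walk a b), p.length ≤ n →
    ∀ (ha : vdeg (G.deleteEdges {s(u,v)}) a ≠ 2) (hb : vdeg (G.deleteEdges {s(u,v)}) b ≠ 2)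
    (hsup : ∀ w, w ∈ p.support → ∀ (hw : vdeg (G.deleteEdges {s(u,v)}) w ≠ 2),
      (⟨w, hw⟩ : {w : V // vdeg (G.deleteEdges {s(u,v)}) w ≠ 2}) ∉ s'),
    (SimpleGraph.induce s'ᶜ (suppress (G.deleteEdges {s(u,v)}))).Reachable
      ⟨⟨a, ha⟩, hsup a p.start_mem_support ha⟩ ⟨⟨b, hb⟩, hsup b p.end_mem_support hb⟩ := by
  intro n
  induction n with
  | zero =>
    intro a b p hlen ha hb hsup
    cases p with
    | nil => rfl
    | cons h q => simp [SimpleGraph.Walk.length_cons] at hlen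
  | succ n ih =>
    intro a b p hlen ha hb hsup
    cases p with
    | nil => rfl
    | cons h q =>
      rename_i c
      rw [SimpleGraph.Walk.length_cons] at hlen
      have hqsup : ∀ w, w ∈ q.support → ∀ (hw : vdeg (G.deleteEdges {s(u,v)}) w ≠ 2),
          (⟨w, hw⟩ : {w : V // vdeg (G.deleteEdges {s(u,v)}) w ≠ 2}) ∉ s' := by
        intro w hw
        exact hsup w (by rw [SimpleGraph.Walk.support_cons]; exact List.mem_cons_of_mem _ hw)
      by_cases hc : vdeg (G.deleteEdges {s(u,v)}) c = 2
      · cases q with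
        | nil => exact absurd hc hb
        | cons h2 q2 =>
          rename_i d
          rw [SimpleGraph.Walk.length_cons] at hlen
          have hq2sup : ∀ w, w ∈ q2.support → ∀ (hw : vdeg (G.deleteEdges {s(u,v)}) w ≠ 2),
              (⟨w, hw⟩ : {w : V // vdeg (G.deleteEdges {s(u,v)}) w ≠ 2}) ∉ s' := by
            intro w hw
            exact hqsup w (by rw [SimpleGraph.Walk.support_cons]; exact List.mem_cons_of_mem _ hw)
          by_cases hd : vdeg (G.deleteEdges {s(u,v)}) d = 2
          · exfalso
            rcases deg2_mem h3 hcard hc with rfl | rfl <;>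
              rcases deg2_mem h3 hcard hd with rfl | rfl
            · exact h2.ne rfl
            · exact H_not_adj_uv h2
            · exact H_not_adj_uv h2.symm
            · exact h2.ne rfl
          · by_cases had : a = d
            · subst had
              have := ih a b q2 (by omega) ha hb hq2sup
              convert this using 2
            · -- suppress adjacency via the path a - c - d
              have hpw : ((SimpleGraph.Walk.cons h (SimpleGraph.Walk.cons h2
                  SimpleGraph.Walk.nil)) : (G.deleteEdges {s(u,v)}).Walk a d).IsPath := by
                rw [SimpleGraph.Walk.isPath_def]
                simp [SimpleGraph.Walk.support_cons, h.ne, h2.ne, had]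
              have hadj : (suppress (G.deleteEdges {s(u,v)})).Adj ⟨a, ha⟩ ⟨d, hd⟩ := by
                refine ⟨fun hh => had (congrArg Subtype.val hh), _, hpw, ?_⟩
                intro w hw hwa hwd
                simp only [SimpleGraph.Walk.support_cons, SimpleGraph.Walk.support_nil,
                  List.mem_cons, List.mem_singleton] at hw
                rcases hw with rfl | rfl | rfl | hfalse
                · exact absurd rfl hwa
                · exact hc
                · exact absurd rfl hwd
                · exact absurd hfalse List.not_mem_nil
              have hd' : (⟨d, hd⟩ : {w : V // vdeg (G.deleteEdges {s(u,v)}) w ≠ 2}) ∉ s' :=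
                hq2sup d q2.start_mem_support hd
              have hia : (SimpleGraph.induce s'ᶜ
                  (suppress (G.deleteEdges {s(u,v)}))).Adj
                  ⟨⟨a, ha⟩, hsup a (SimpleGraph.Walk.start_mem_support _) ha⟩ ⟨⟨d, hd⟩, hd'⟩ := hadj
              exact hia.reachable.trans (ih d b q2 (by omega) hd hb hq2sup)
      · have hadj : (suppress (G.deleteEdges {s(u,v)})).Adj ⟨a, ha⟩ ⟨c, hc⟩ := by
          refine ⟨fun hh => h.ne (congrArg Subtype.val hh),
            SimpleGraph.Walk.cons h SimpleGraph.Walk.nil, ?_, ?_⟩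
          · rw [SimpleGraph.Walk.isPath_def]
            simp [SimpleGraph.Walk.support_cons, h.ne]
          · intro w hw hwa hwc
            simp only [SimpleGraph.Walk.support_cons, SimpleGraph.Walk.support_nil,
              List.mem_cons, List.mem_singleton] at hw
            rcases hw with rfl | rfl | hfalse
            · exact absurd rfl hwa
            · exact absurd rfl hwc
            · exact absurd hfalse List.not_mem_nil
        have hc' : (⟨c, hc⟩ : {w : V // vdeg (G.deleteEdges {s(u,v)}) w ≠ 2}) ∉ s' :=
          hqsup c q.start_mem_support hc
        have hia : (SimpleGraph.induce s'ᶜ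
            (suppress (G.deleteEdges {s(u,v)}))).Adj
            ⟨⟨a, ha⟩, hsup a (SimpleGraph.Walk.start_mem_support _) ha⟩ ⟨⟨c, hc⟩, hc'⟩ := hadj
        exact hia.reachable.trans (ih c b q (by omega) hc hb hqsup)


lemma splice {G : SimpleGraph V} {u v : V} {S0 : Set V} (hu : u ∈ S0ᶜ) (hv : v ∈ S0ᶜ)
    {x y : ↥(S0ᶜ)} (p : (SimpleGraph.induce S0ᶜ G).Walk x y) :
    (SimpleGraph.induce S0ᶜ (G.deleteEdges {s(u,v)})).Reachable x y ∨
    ((SimpleGraph.induce S0ᶜ (G.deleteEdges {s(u,v)})).Reachable x ⟨u, hu⟩ ∧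
      (SimpleGraph.induce S0ᶜ (G.deleteEdges {s(u,v)})).Reachable ⟨v, hv⟩ y) ∨
    ((SimpleGraph.induce S0ᶜ (G.deleteEdges {s(u,v)})).Reachable x ⟨v, hv⟩ ∧
      (SimpleGraph.induce S0ᶜ (G.deleteEdges {s(u,v)})).Reachable ⟨u, hu⟩ y) := by
  induction p with
  | nil => exact Or.inl (SimpleGraph.Reachable.refl _)
  | cons h q ih =>
    rename_i a c b
    have hG : G.Adj a.1 c.1 := h
    by_cases hx : s(a.1, c.1) = s(u, v)
    · rw [Sym2.eq_iff] at hx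
      rcases hx with ⟨h1, h2⟩ | ⟨h1, h2⟩
      · have hau : a = ⟨u, hu⟩ := Subtype.ext h1
        have hcv : c = ⟨v, hv⟩ := Subtype.ext h2
        subst hau
        subst hcv
        rcases ih with r | ⟨r1, r2⟩ | ⟨r1, r2⟩
        · exact Or.inr (Or.inl ⟨SimpleGraph.Reachable.refl _, r⟩)
        · exact Or.inl (r1.symm.trans r2)
        · exact Or.inl r2
      · have hau : a = ⟨v, hv⟩ := Subtype.ext h1
        have hcv : c = ⟨u, hu⟩ := Subtype.ext h2
        subst hau
        subst hcv
        rcases ih with r | ⟨r1, r2⟩ | ⟨r1, r2⟩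
        · exact Or.inr (Or.inr ⟨SimpleGraph.Reachable.refl _, r⟩)
        · exact Or.inl r2
        · exact Or.inl (r1.symm.trans r2)
    · have hH : (SimpleGraph.induce S0ᶜ (G.deleteEdges {s(u,v)})).Adj a c := by
        show (G.deleteEdges {s(u,v)}).Adj a.1 c.1
        rw [SimpleGraph.deleteEdges_adj]
        exact ⟨hG, by simpa using hx⟩
      rcases ih with r | ⟨r1, r2⟩ | ⟨r1, r2⟩
      · exact Or.inl (hH.reachable.trans r)
      · exact Or.inr (Or.inl ⟨hH.reachable.trans r1, r2⟩)
      · exact Or.inr (Or.inr ⟨hH.reachable.trans r1, r2⟩)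


lemma walk_transfer {W : Type*} {K K' : SimpleGraph W} (h : ∀ a b, K.Adj a b → K'.Adj a b)
    {x y : W} (p : K.Walk x y) : K'.Reachable x y := by
  induction p with
  | nil => rfl
  | cons ha q ih => exact ((h _ _ ha).reachable).trans ih

lemma no_cross_contra [Finite V] {G : SimpleGraph V} (h3 : ThreeConnected G)
    {S A B : Set V} (hS : S.ncard ≤ 2) (hd : Disjoint A B) (hun : A ∪ B = Sᶜ)
    (hAne : A.Nonempty) (hBne : B.Nonempty)
    (hno : ∀ a ∈ A, ∀ b ∈ B, ¬ G.Adj a b) : False := by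
  obtain ⟨a, ha⟩ := hAne
  obtain ⟨b, hb⟩ := hBne
  have haS : a ∈ Sᶜ := by rw [← hun]; exact Set.mem_union_left _ ha
  have hbS : b ∈ Sᶜ := by rw [← hun]; exact Set.mem_union_right _ hb
  obtain ⟨p⟩ := (h3.2 S hS).preconnected ⟨a, haS⟩ ⟨b, hbS⟩
  refine cross_lemma (A := {z : ↥(Sᶜ) | z.1 ∈ A}) (B := {z : ↥(Sᶜ) | z.1 ∈ B}) ?_ ?_ p ha hb ?_
  · rw [Set.disjoint_left]
    intro z hz1 hz2
    exact hd.ne_of_mem hz1 hz2 rfl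
  · intro za hza zb hzb hadj
    exact hno za.1 hza zb.1 hzb hadj
  · intro z _
    have : z.1 ∈ A ∪ B := by rw [hun]; exact z.2
    exact this

lemma mpr_aux [Finite V] {G : SimpleGraph V} {u v : V} (h3 : ThreeConnected G)
    (hcard : 6 ≤ Nat.card V) (he : G.Adj u v)
    {S A B : Set V} (hS : S.ncard = 2) (hd : Disjoint A B) (hun : A ∪ B = Sᶜ)
    (hA : 2 ≤ A.ncard) (hB : 2 ≤ B.ncard)
    (hno : ∀ a ∈ A, ∀ b ∈ B, ¬ (G.deleteEdges {s(u,v)}).Adj a b)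
    (huA : u ∈ A) (hvB : v ∈ B) :
    ¬ ThreeConnected (suppress (G.deleteEdges {s(u,v)})) := by
  intro hTC
  have hAS : A ⊆ Sᶜ := hun ▸ Set.subset_union_left
  have hBS : B ⊆ Sᶜ := hun ▸ Set.subset_union_right
  have hSdeg : ∀ w ∈ S, vdeg (G.deleteEdges {s(u,v)}) w ≠ 2 := by
    intro w hw
    have hwu : w ≠ u := fun h => (hAS huA) (h ▸ hw)
    have hwv : w ≠ v := fun h => (hBS hvB) (h ▸ hw)
    rw [vdeg_deleteEdges_ne hwu hwv]
    have := min_degree_three h3 hcard w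
    omega
  set s' : Set {w : V // vdeg (G.deleteEdges {s(u,v)}) w ≠ 2} := {x | x.1 ∈ S} with hs'
  have himg : Subtype.val '' s' = S := by
    ext z
    constructor
    · rintro ⟨x, hx, rfl⟩; exact hx
    · intro hz; exact ⟨⟨z, hSdeg z hz⟩, hz, rfl⟩
  have hs'card : s'.ncard = 2 := by
    rw [← Set.ncard_image_of_injective s' Subtype.val_injective, himg, hS]
  -- pick a ∈ A with a ≠ u, b ∈ B with b ≠ v
  obtain ⟨a, haA, hau⟩ := Set.exists_ne_of_one_lt_ncard (s := A) (by omega) u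
  obtain ⟨b, hbB, hbv⟩ := Set.exists_ne_of_one_lt_ncard (s := B) (by omega) v
  have hav : a ≠ v := fun h => hd.ne_of_mem haA hvB h
  have hbu : b ≠ u := fun h => hd.ne_of_mem huA hbB h.symm
  have ha2 : vdeg (G.deleteEdges {s(u,v)}) a ≠ 2 := by
    rw [vdeg_deleteEdges_ne hau hav]; have := min_degree_three h3 hcard a; omega
  have hb2 : vdeg (G.deleteEdges {s(u,v)}) b ≠ 2 := by
    rw [vdeg_deleteEdges_ne hbu hbv]; have := min_degree_three h3 hcard b; omega
  have haso : (⟨a, ha2⟩ : {w : V // vdeg (G.deleteEdges {s(u,v)}) w ≠ 2}) ∈ s'ᶜ :=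
    fun hmem => (hAS haA) hmem
  have hbso : (⟨b, hb2⟩ : {w : V // vdeg (G.deleteEdges {s(u,v)}) w ≠ 2}) ∈ s'ᶜ :=
    fun hmem => (hBS hbB) hmem
  obtain ⟨p⟩ := (hTC.2 s' (le_of_eq hs'card)).preconnected ⟨_, haso⟩ ⟨_, hbso⟩
  refine cross_lemma (A := {z : ↥(s'ᶜ) | z.1.1 ∈ A}) (B := {z : ↥(s'ᶜ) | z.1.1 ∈ B})
    ?_ ?_ p haA hbB ?_
  · rw [Set.disjoint_left]
    intro z hz1 hz2
    exact hd.ne_of_mem hz1 hz2 rfl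
  · -- no suppressed edge crosses from A to B
    rintro za hza zb hzb hadj
    obtain ⟨hne, pw, hpw, hint⟩ := (hadj :
      (suppress (G.deleteEdges {s(u,v)})).Adj za.1 zb.1)
    refine cross_lemma hd (fun a' ha' b' hb' hab => hno a' ha' b' hb' hab) pw hza hzb ?_
    intro w hw
    by_cases hwa : w = za.1.1
    · exact Or.inl (hwa ▸ hza)
    · by_cases hwb : w = zb.1.1
      · exact Or.inr (hwb ▸ hzb)
      · have h2 := hint w hw hwa hwb
        rcases deg2_mem h3 hcard h2 with rfl | rfl
        · exact Or.inl huA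
        · exact Or.inr hvB
  · intro z _
    have hz : z.1.1 ∈ A ∪ B := by
      rw [hun]; exact fun hmem => z.2 hmem
    exact hz


end Aux

/-- Holton–Jackson–Saito–Wormald, Theorem 1: in a simple
triconnected graph of order at least six, an edge `e` is nonremovable iff there
is a two-element vertex set `S` such that `G - e - S` has exactly two components,
each with at least two vertices. -/
theorem stmt_6 (G : SimpleGraph V) (h3 : ThreeConnected G)
    (hcard : 6 ≤ Nat.card V) (u v : V) (he : G.Adj u v) :
    ¬ Removable G u v ↔
      ∃ S : Set V, S.ncard = 2 ∧ ∃ A B : Set V,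
        Disjoint A B ∧ A ∪ B = Sᶜ ∧ 2 ≤ A.ncard ∧ 2 ≤ B.ncard ∧
        (SimpleGraph.induce A (G.deleteEdges {s(u, v)})).Connected ∧
        (SimpleGraph.induce B (G.deleteEdges {s(u, v)})).Connected ∧
        ∀ a ∈ A, ∀ b ∈ B, ¬ (G.deleteEdges {s(u, v)}).Adj a b := by
  haveI : Finite V := by
    have h0 : 0 < Nat.card V := by omega
    exact (Nat.card_pos_iff.mp h0).2
  constructor
  · -- hard direction: nonremovable → separating pair
    intro hnr
    unfold Removable ThreeConnected at hnr
    push_neg at hnr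
    have hcard4 : 4 ≤ Nat.card {w : V // vdeg (G.deleteEdges {s(u,v)}) w ≠ 2} := by
      have h1 : Nat.card {w : V // vdeg (G.deleteEdges {s(u,v)}) w ≠ 2}
          = ({w : V | vdeg (G.deleteEdges {s(u,v)}) w ≠ 2}).ncard := Nat.card_coe_set_eq _
      have h2 : {w : V | vdeg (G.deleteEdges {s(u,v)}) w ≠ 2}ᶜ ⊆ {u, v} := by
        intro w hw
        simp only [Set.mem_compl_iff, Set.mem_setOf_eq, not_not] at hw
        rcases deg2_mem h3 hcard hw with rfl | rfl
        · exact Set.mem_insert _ _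
        · exact Set.mem_insert_of_mem _ rfl
      have h5 : ({u, v} : Set V).ncard ≤ 2 := by
        refine le_trans (Set.ncard_insert_le _ _) ?_
        rw [Set.ncard_singleton]
      have h6 := le_trans (Set.ncard_le_ncard h2 (Set.toFinite _)) h5
      have h7 := Set.ncard_add_ncard_compl {w : V | vdeg (G.deleteEdges {s(u,v)}) w ≠ 2}
      omega
    obtain ⟨s', hs'2, hncon⟩ := hnr hcard4
    have hcompl : 2 ≤ (s'ᶜ).ncard := by
      have h7 := Set.ncard_add_ncard_compl s'
      have h8 : Nat.card ↥({w : V | vdeg (G.deleteEdges {s(u,v)}) w ≠ 2}) =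
          Nat.card {w : V // vdeg (G.deleteEdges {s(u,v)}) w ≠ 2} := rfl
      omega
    obtain ⟨w0, hw0⟩ : (s'ᶜ).Nonempty := Set.nonempty_of_ncard_ne_zero (by omega)
    have hnpre : ¬ (SimpleGraph.induce s'ᶜ
        (suppress (G.deleteEdges {s(u,v)}))).Preconnected :=
      fun hp => hncon ((SimpleGraph.connected_iff _).mpr ⟨hp, ⟨⟨w0, hw0⟩⟩⟩)
    unfold SimpleGraph.Preconnected at hnpre
    push_neg at hnpre
    obtain ⟨X, Y, hXY⟩ := hnpre
    set S0 : Set V := Subtype.val '' s' with hS0def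
    have hS0le : S0.ncard ≤ 2 := by
      rw [hS0def, Set.ncard_image_of_injective _ Subtype.val_injective]
      exact hs'2
    have hmemS0 : ∀ (z : {w : V // vdeg (G.deleteEdges {s(u,v)}) w ≠ 2}),
        z.1 ∈ S0 ↔ z ∈ s' := by
      intro z
      constructor
      · rintro ⟨x', hx', hval⟩
        rwa [Subtype.val_injective hval] at hx'
      · intro h
        exact ⟨z, h, rfl⟩
    have hxS0 : X.1.1 ∈ S0ᶜ := fun h => X.2 ((hmemS0 X.1).mp h)
    have hyS0 : Y.1.1 ∈ S0ᶜ := fun h => Y.2 ((hmemS0 Y.1).mp h)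
    have hnrHH : ¬ (SimpleGraph.induce S0ᶜ (G.deleteEdges {s(u,v)})).Reachable
        ⟨X.1.1, hxS0⟩ ⟨Y.1.1, hyS0⟩ := by
      intro hr
      obtain ⟨p⟩ := hr
      obtain ⟨q, hq⟩ := induce_to_walk p
      have hsup : ∀ w, w ∈ q.support → ∀ (hw : vdeg (G.deleteEdges {s(u,v)}) w ≠ 2),
          (⟨w, hw⟩ : {w : V // vdeg (G.deleteEdges {s(u,v)}) w ≠ 2}) ∉ s' := by
        intro w hw hw2 hmem
        obtain ⟨hmS, -⟩ := hq w hw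
        exact hmS ((hmemS0 ⟨w, hw2⟩).mpr hmem)
      exact hXY (compress h3 hcard he s' q.length _ _ q le_rfl X.1.2 Y.1.2 hsup)
    have huS0 : u ∈ S0ᶜ := by
      intro huS0
      apply hnrHH
      obtain ⟨p⟩ := (h3.2 S0 hS0le).preconnected ⟨X.1.1, hxS0⟩ ⟨Y.1.1, hyS0⟩
      refine walk_transfer ?_ p
      intro a b hab
      have hG : G.Adj a.1 b.1 := hab
      show (G.deleteEdges {s(u,v)}).Adj a.1 b.1
      rw [SimpleGraph.deleteEdges_adj]
      refine ⟨hG, fun hmem => ?_⟩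
      rw [Set.mem_singleton_iff, Sym2.eq_iff] at hmem
      rcases hmem with ⟨h1, -⟩ | ⟨-, h2⟩
      · exact a.2 (h1 ▸ huS0)
      · exact b.2 (h2 ▸ huS0)
    have hvS0 : v ∈ S0ᶜ := by
      intro hvS0
      apply hnrHH
      obtain ⟨p⟩ := (h3.2 S0 hS0le).preconnected ⟨X.1.1, hxS0⟩ ⟨Y.1.1, hyS0⟩
      refine walk_transfer ?_ p
      intro a b hab
      have hG : G.Adj a.1 b.1 := hab
      show (G.deleteEdges {s(u,v)}).Adj a.1 b.1
      rw [SimpleGraph.deleteEdges_adj]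
      refine ⟨hG, fun hmem => ?_⟩
      rw [Set.mem_singleton_iff, Sym2.eq_iff] at hmem
      rcases hmem with ⟨-, h1⟩ | ⟨h2, -⟩
      · exact b.2 (h1 ▸ hvS0)
      · exact a.2 (h2 ▸ hvS0)
    have hnuv : ¬ (SimpleGraph.induce S0ᶜ (G.deleteEdges {s(u,v)})).Reachable
        ⟨u, huS0⟩ ⟨v, hvS0⟩ := by
      intro r
      apply hnrHH
      have hall : ∀ z : ↥(S0ᶜ), (SimpleGraph.induce S0ᶜ (G.deleteEdges {s(u,v)})).Reachable
          ⟨u, huS0⟩ z := by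
        intro z
        obtain ⟨p⟩ := (h3.2 S0 hS0le).preconnected ⟨u, huS0⟩ z
        rcases splice huS0 hvS0 p with rr | ⟨r1, r2⟩ | ⟨r1, r2⟩
        · exact rr
        · exact r.trans r2
        · exact r2
      exact (hall _).symm.trans (hall _)
    set A : Set V := {w : V | ∃ h : w ∈ S0ᶜ,
      (SimpleGraph.induce S0ᶜ (G.deleteEdges {s(u,v)})).Reachable ⟨u, huS0⟩ ⟨w, h⟩} with hAdef
    set B : Set V := {w : V | ∃ h : w ∈ S0ᶜ,
      ¬ (SimpleGraph.induce S0ᶜ (G.deleteEdges {s(u,v)})).Reachable ⟨u, huS0⟩ ⟨w, h⟩} with hBdef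
    have huA : u ∈ A := ⟨huS0, SimpleGraph.Reachable.refl _⟩
    have hvB : v ∈ B := ⟨hvS0, hnuv⟩
    have hdAB : Disjoint A B := by
      rw [Set.disjoint_left]
      rintro w ⟨h1, h2⟩ ⟨h1', h2'⟩
      exact h2' h2
    have hunAB : A ∪ B = S0ᶜ := by
      ext w
      constructor
      · rintro (⟨h1, -⟩ | ⟨h1, -⟩) <;> exact h1
      · intro hw
        by_cases hr : (SimpleGraph.induce S0ᶜ (G.deleteEdges {s(u,v)})).Reachable
            ⟨u, huS0⟩ ⟨w, hw⟩
        · exact Or.inl ⟨hw, hr⟩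
        · exact Or.inr ⟨hw, hr⟩
    have hnoAB : ∀ a ∈ A, ∀ b ∈ B, ¬ (G.deleteEdges {s(u,v)}).Adj a b := by
      rintro a ⟨ha1, ha2⟩ b ⟨hb1, hb2⟩ hadj
      have hadj' : (SimpleGraph.induce S0ᶜ (G.deleteEdges {s(u,v)})).Adj ⟨a, ha1⟩ ⟨b, hb1⟩ := hadj
      exact hb2 (ha2.trans hadj'.reachable)
    have hBreach : ∀ z, ∀ hz : z ∈ B, ∀ hz' : z ∈ S0ᶜ,
        (SimpleGraph.induce S0ᶜ (G.deleteEdges {s(u,v)})).Reachable ⟨v, hvS0⟩ ⟨z, hz'⟩ := by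
      rintro z ⟨h1, h2⟩ hz'
      obtain ⟨p⟩ := (h3.2 S0 hS0le).preconnected ⟨u, huS0⟩ ⟨z, hz'⟩
      rcases splice huS0 hvS0 p with rr | ⟨r1, r2⟩ | ⟨r1, r2⟩
      · exact absurd rr h2
      · exact r2
      · exact absurd r1 hnuv
    have hAconn : (SimpleGraph.induce A (G.deleteEdges {s(u,v)})).Connected := by
      have hAreach : ∀ z : ↥A, (SimpleGraph.induce A (G.deleteEdges {s(u,v)})).Reachable
          ⟨u, huA⟩ z := by
        intro z
        obtain ⟨hz1, hz2⟩ := z.2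
        obtain ⟨p⟩ := hz2
        obtain ⟨q, hq⟩ := induce_to_walk p
        have := walk_to_induce q (fun w hw => hq w hw) huA (by exact z.2)
        exact this
      exact (SimpleGraph.connected_iff _).mpr ⟨fun z1 z2 => (hAreach z1).symm.trans (hAreach z2), ⟨⟨u, huA⟩⟩⟩
    have hBconn : (SimpleGraph.induce B (G.deleteEdges {s(u,v)})).Connected := by
      have hBreach2 : ∀ z : ↥B, (SimpleGraph.induce B (G.deleteEdges {s(u,v)})).Reachable
          ⟨v, hvB⟩ z := by
        intro z
        obtain ⟨hz1, hz2⟩ := z.2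
        have hr := hBreach z.1 z.2 hz1
        obtain ⟨p⟩ := hr
        obtain ⟨q, hq⟩ := induce_to_walk p
        have hsupB : ∀ w, w ∈ q.support → w ∈ B := by
          intro w hw
          obtain ⟨hmS, hre⟩ := hq w hw
          refine ⟨hmS, fun hru => ?_⟩
          exact hnuv (hru.trans hre.symm)
        exact walk_to_induce q hsupB hvB (hsupB z.1 q.end_mem_support)
      exact (SimpleGraph.connected_iff _).mpr ⟨fun z1 z2 => (hBreach2 z1).symm.trans (hBreach2 z2), ⟨⟨v, hvB⟩⟩⟩
    have hxAB : X.1.1 ∈ A ∪ B := by rw [hunAB]; exact hxS0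
    have hyAB : Y.1.1 ∈ A ∪ B := by rw [hunAB]; exact hyS0
    have hA2 : 2 ≤ A.ncard := by
      by_contra hA2
      push_neg at hA2
      have hAsing : ∀ a ∈ A, a = u := by
        intro a ha
        by_contra hne
        have := (Set.one_lt_ncard (Set.toFinite A)).mpr ⟨a, ha, u, huA, hne⟩
        omega
      have hnb : (G.deleteEdges {s(u,v)}).neighborSet u ⊆ S0 := by
        intro c hc
        by_contra hcS0
        have hadj : (SimpleGraph.induce S0ᶜ (G.deleteEdges {s(u,v)})).Adj
            ⟨u, huS0⟩ ⟨c, fun h => hcS0 h⟩ := hc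
        have hcA : c ∈ A := ⟨fun h => hcS0 h, hadj.reachable⟩
        exact (G.deleteEdges {s(u,v)}).irrefl ((hAsing c hcA) ▸ hc)
      have hdegu : vdeg (G.deleteEdges {s(u,v)}) u ≤ 2 :=
        le_trans (Set.ncard_le_ncard hnb (Set.toFinite _)) hS0le
      have h1 := vdeg_deleteEdges_u (G := G) he
      have h2 := min_degree_three h3 hcard u
      have hdegu2 : vdeg (G.deleteEdges {s(u,v)}) u = 2 := by omega
      have hxu : X.1.1 ≠ u := fun h => X.1.2 (by rw [h]; exact hdegu2)
      have hyu : Y.1.1 ≠ u := fun h => Y.1.2 (by rw [h]; exact hdegu2)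
      have hxB : X.1.1 ∈ B := by
        rcases hxAB with h | h
        · exact absurd (hAsing _ h) hxu
        · exact h
      have hyB : Y.1.1 ∈ B := by
        rcases hyAB with h | h
        · exact absurd (hAsing _ h) hyu
        · exact h
      exact hnrHH ((hBreach _ hxB hxS0).symm.trans (hBreach _ hyB hyS0))
    have hB2 : 2 ≤ B.ncard := by
      by_contra hB2
      push_neg at hB2
      have hBsing : ∀ b ∈ B, b = v := by
        intro b hb
        by_contra hne
        have := (Set.one_lt_ncard (Set.toFinite B)).mpr ⟨b, hb, v, hvB, hne⟩
        omega
      have hnb : (G.deleteEdges {s(u,v)}).neighborSet v ⊆ S0 := by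
        intro c hc
        by_contra hcS0
        have hadj : (SimpleGraph.induce S0ᶜ (G.deleteEdges {s(u,v)})).Adj
            ⟨v, hvS0⟩ ⟨c, fun h => hcS0 h⟩ := hc
        have hcAB : c ∈ A ∪ B := by rw [hunAB]; exact fun h => hcS0 h
        rcases hcAB with hcA | hcB
        · obtain ⟨h1, h2⟩ := hcA
          exact hnuv (h2.trans hadj.reachable.symm)
        · exact (G.deleteEdges {s(u,v)}).irrefl ((hBsing c hcB) ▸ hc)
      have hdegv : vdeg (G.deleteEdges {s(u,v)}) v ≤ 2 :=
        le_trans (Set.ncard_le_ncard hnb (Set.toFinite _)) hS0le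
      have h1 := vdeg_deleteEdges_u (G := G) he.symm
      rw [show (s(v,u) : Sym2 V) = s(u,v) from Sym2.eq_swap] at h1
      have h2 := min_degree_three h3 hcard v
      have hdegv2 : vdeg (G.deleteEdges {s(u,v)}) v = 2 := by omega
      have hxv : X.1.1 ≠ v := fun h => X.1.2 (by rw [h]; exact hdegv2)
      have hyv : Y.1.1 ≠ v := fun h => Y.1.2 (by rw [h]; exact hdegv2)
      have hxA : X.1.1 ∈ A := by
        rcases hxAB with h | h
        · exact h
        · exact absurd (hBsing _ h) hxv
      have hyA : Y.1.1 ∈ A := by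
        rcases hyAB with h | h
        · exact h
        · exact absurd (hBsing _ h) hyv
      obtain ⟨hx1, hx2⟩ := hxA
      obtain ⟨hy1, hy2⟩ := hyA
      exact hnrHH (hx2.symm.trans hy2)
    have hS0card : S0.ncard = 2 := by
      by_contra hne2
      have hle1 : S0.ncard ≤ 1 := by omega
      have hS1le : (insert u S0).ncard ≤ 2 :=
        le_trans (Set.ncard_insert_le _ _) (by omega)
      obtain ⟨a0, ha0A, ha0u⟩ := Set.exists_ne_of_one_lt_ncard (s := A) (by omega) u
      refine no_cross_contra h3 (S := insert u S0) (A := A \ {u}) (B := B) hS1le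
        (Set.disjoint_of_subset_left Set.diff_subset hdAB) ?_
        ⟨a0, ha0A, ha0u⟩ ⟨v, hvB⟩ ?_
      · ext w
        simp only [Set.mem_union, Set.mem_diff, Set.mem_singleton_iff, Set.mem_compl_iff,
          Set.mem_insert_iff, not_or]
        constructor
        · rintro (⟨hwA, hwu⟩ | hwB)
          · obtain ⟨h1, -⟩ := hwA
            exact ⟨hwu, h1⟩
          · refine ⟨fun hwu => hdAB.ne_of_mem huA hwB hwu.symm, ?_⟩
            obtain ⟨h1, -⟩ := hwB
            exact h1
        · rintro ⟨hwu, hwS0⟩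
          have : w ∈ A ∪ B := by rw [hunAB]; exact hwS0
          rcases this with h | h
          · exact Or.inl ⟨h, hwu⟩
          · exact Or.inr h
      · rintro a ⟨haA, hau⟩ b hb hadj
        refine hnoAB a haA b hb ?_
        rw [SimpleGraph.deleteEdges_adj]
        refine ⟨hadj, fun hmem => ?_⟩
        rw [Set.mem_singleton_iff, Sym2.eq_iff] at hmem
        rcases hmem with ⟨h1, -⟩ | ⟨h1, -⟩
        · exact hau h1
        · exact hdAB.ne_of_mem haA hvB h1
    exact ⟨S0, hS0card, A, B, hdAB, hunAB, hA2, hB2, hAconn, hBconn, hnoAB⟩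
  · -- easy direction: separating pair → nonremovable
    rintro ⟨S, hS, A, B, hd, hun, hA, hB, hAc, hBc, hno⟩
    have hAS : A ⊆ Sᶜ := hun ▸ Set.subset_union_left
    have hBS : B ⊆ Sᶜ := hun ▸ Set.subset_union_right
    have hAne : A.Nonempty := Set.nonempty_of_ncard_ne_zero (by omega)
    have hBne : B.Nonempty := Set.nonempty_of_ncard_ne_zero (by omega)
    have key : ∀ (hok : ∀ a ∈ A, ∀ b ∈ B, s(a,b) ≠ s(u,v)), False := by
      intro hok
      refine no_cross_contra h3 hS.le hd hun hAne hBne ?_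
      intro a ha b hb hadj
      refine hno a ha b hb ?_
      rw [SimpleGraph.deleteEdges_adj]
      exact ⟨hadj, fun hmem => hok a ha b hb (Set.mem_singleton_iff.mp hmem)⟩
    have huS : u ∉ S := by
      intro huS
      refine key ?_
      intro a ha b hb heq
      rcases Sym2.eq_iff.mp heq with ⟨rfl, rfl⟩ | ⟨rfl, rfl⟩
      · exact hAS ha huS
      · exact hBS hb huS
    have hvS : v ∉ S := by
      intro hvS
      refine key ?_
      intro a ha b hb heq
      rcases Sym2.eq_iff.mp heq with ⟨rfl, rfl⟩ | ⟨rfl, rfl⟩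
      · exact hBS hb hvS
      · exact hAS ha hvS
    have huAB : u ∈ A ∪ B := by rw [hun]; exact huS
    have hvAB : v ∈ A ∪ B := by rw [hun]; exact hvS
    rcases huAB with huA | huB <;> rcases hvAB with hvA | hvB
    · exfalso
      refine key ?_
      intro a ha b hb heq
      rcases Sym2.eq_iff.mp heq with ⟨rfl, rfl⟩ | ⟨rfl, rfl⟩
      · exact hd.ne_of_mem hvA hb rfl
      · exact hd.ne_of_mem huA hb rfl
    · exact mpr_aux h3 hcard he hS hd hun hA hB hno huA hvB
    · have hres := mpr_aux h3 hcard he.symm (S := S) (A := A) (B := B) hS hd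
        hun hA hB ?_ hvA huB
      · rw [show (s(v,u) : Sym2 V) = s(u,v) from Sym2.eq_swap] at hres
        exact hres
      · intro a ha b hb hadj
        refine hno a ha b hb ?_
        rw [show (s(v,u) : Sym2 V) = s(u,v) from Sym2.eq_swap] at hadj
        exact hadj
    · exfalso
      refine key ?_
      intro a ha b hb heq
      rcases Sym2.eq_iff.mp heq with ⟨rfl, rfl⟩ | ⟨rfl, rfl⟩
      · exact hd.ne_of_mem ha huB rfl
      · exact hd.ne_of_mem ha hvB rfl
end
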